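/- arXiv:2211.11217 — 5 statements merged into one kernel-verified Lean document; each statement's English description precedes it below -/
import Mathlib

section
/- With T = f_{abc}((1/2) v_{aμ} v_{bν} F_c^{νμ} + u_a v_b^μ ∂_μ ũ_c), T^μ = f_{abc}(u_a v_{bν} F_c^{νμ} − (1/2) u_a u_b ∂^μ ũ_c), and T^{μν} = (1/2) f_{abc} u_a u_b F_c^{μν}, where F_a^{μν} = ∂^μ v_a^ν − ∂^ν v_a^μ and f_{abc} is totally antisymmetric, one has the descent equations d_Q T = i ∂_μ T^μ, d_Q T^μ = i ∂_ν T^{μν}, and d_Q T^{μν} = 0, all modulo the equations of motion □v = □u = □ũ = 0. -/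
open scoped BigOperators

/-- The diagonal of the Minkowski metric `η = diag(1,−1,−1,−1)`. -/
noncomputable def minkEta : Fin 4 → ℝ := ![1, -1, -1, -1]


namespace DescentAux

lemma etaSq (mu : Fin 4) : (minkEta mu : ℂ) * (minkEta mu : ℂ) = 1 := by
  fin_cases mu <;> norm_num [minkEta]

variable {A : Type*} [AddCommGroup A] [Module ℂ A] {r : ℕ}

lemma halfCancel (X : A) (h : X = -X) : X = 0 := by
  have h2 : (2:ℂ) • X = 0 := by
    rw [two_smul]; nth_rewrite 2 [h]; simp
  have h3 : X = ((1/2:ℂ) * 2) • X := by norm_num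
  rw [h3, mul_smul, h2, smul_zero]

lemma swapAB (f : Fin r → Fin r → Fin r → ℝ)
    (hf1 : ∀ a b c, f a b c = - f b a c) (G : Fin r → Fin r → Fin r → A) :
    ∑ a, ∑ b, ∑ c, (f a b c : ℂ) • G a b c
      = ∑ a, ∑ b, ∑ c, (f a b c : ℂ) • (-(G b a c)) := by
  rw [Finset.sum_comm]
  refine Finset.sum_congr rfl fun a _ => Finset.sum_congr rfl fun b _ =>
    Finset.sum_congr rfl fun c _ => ?_
  rw [hf1 b a c]
  push_cast
  rw [neg_smul, smul_neg]

lemma swapBC (f : Fin r → Fin r → Fin r → ℝ)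
    (hf2 : ∀ a b c, f a b c = - f a c b) (G : Fin r → Fin r → Fin r → A) :
    ∑ a, ∑ b, ∑ c, (f a b c : ℂ) • G a b c
      = ∑ a, ∑ b, ∑ c, (f a b c : ℂ) • (-(G a c b)) := by
  refine Finset.sum_congr rfl fun a _ => ?_
  rw [Finset.sum_comm]
  refine Finset.sum_congr rfl fun b _ => Finset.sum_congr rfl fun c _ => ?_
  rw [hf2 a c b]
  push_cast
  rw [neg_smul, smul_neg]

end DescentAux

/-- in the graded jet algebra of pure Yang-Mills (modelled as a ℂ-algebra with
an even/odd parity, graded-commutative multiplication, commuting formal derivatives `∂_μ`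
and the odd graded derivation `d_Q` with `d_Q v^μ_a = i∂^μ u_a`, `d_Q u_a = 0`,
`d_Q ũ_a = −i∂_μ v^μ_a`, working modulo the equations of motion `□v = □u = □ũ = 0`), the
expressions
`T = f_{abc}((1/2) v_{aμ} v_{bν} F_c^{νμ} + u_a v_b^μ ∂_μ ũ_c)`,
`T^μ = f_{abc}(u_a v_{bν} F_c^{νμ} − (1/2) u_a u_b ∂^μ ũ_c)`,
`T^{μν} = (1/2) f_{abc} u_a u_b F_c^{μν}` with `F_a^{μν} = ∂^μ v_a^ν − ∂^ν v_a^μ` and `f`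
totally antisymmetric satisfy the descent equations
`d_Q T = i ∂_μ T^μ`, `d_Q T^μ = i ∂_ν T^{μν}`, `d_Q T^{μν} = 0`. -/
theorem descent_equations
    {r : ℕ} {A : Type*} [Ring A] [Algebra ℂ A]
    (f : Fin r → Fin r → Fin r → ℝ)
    (hf1 : ∀ a b c, f a b c = - f b a c)
    (hf2 : ∀ a b c, f a b c = - f a c b)
    (ev od : Set A)
    (hevev : ∀ x ∈ ev, ∀ y ∈ ev, x * y ∈ ev)
    (hodod : ∀ x ∈ od, ∀ y ∈ od, x * y ∈ ev)
    (hevod : ∀ x ∈ ev, ∀ y ∈ od, x * y ∈ od)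
    (hodev : ∀ x ∈ od, ∀ y ∈ ev, x * y ∈ od)
    (hcomm : ∀ x ∈ ev, ∀ y : A, Commute x y)
    (hanti : ∀ x ∈ od, ∀ y ∈ od, x * y = -(y * x))
    (d : Fin 4 → Module.End ℂ A)
    (hdLeib : ∀ (μ : Fin 4) (x y : A), d μ (x * y) = d μ x * y + x * d μ y)
    (hdd : ∀ μ ν, Commute (d μ) (d ν))
    (hdev : ∀ μ, ∀ x ∈ ev, d μ x ∈ ev)
    (hdod : ∀ μ, ∀ x ∈ od, d μ x ∈ od)
    (dQ : Module.End ℂ A)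
    (hdQev : ∀ x ∈ ev, ∀ y : A, dQ (x * y) = dQ x * y + x * dQ y)
    (hdQod : ∀ x ∈ od, ∀ y : A, dQ (x * y) = dQ x * y - x * dQ y)
    (hdQd : ∀ μ, dQ ∘ₗ d μ = d μ ∘ₗ dQ)
    (v : Fin r → Fin 4 → A) (u ut : Fin r → A)
    (hv : ∀ a μ, v a μ ∈ ev) (hu : ∀ a, u a ∈ od) (hut : ∀ a, ut a ∈ od)
    (hdQv : ∀ a μ, dQ (v a μ) = (minkEta μ : ℂ) • (Complex.I • d μ (u a)))
    (hdQu : ∀ a, dQ (u a) = 0)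
    (hdQut : ∀ a, dQ (ut a) = -(Complex.I • ∑ μ, d μ (v a μ)))
    (eomv : ∀ a ν, ∑ μ, (minkEta μ : ℂ) • d μ (d μ (v a ν)) = 0)
    (eomu : ∀ a, ∑ μ, (minkEta μ : ℂ) • d μ (d μ (u a)) = 0)
    (eomut : ∀ a, ∑ μ, (minkEta μ : ℂ) • d μ (d μ (ut a)) = 0) :
    (let Fup : Fin r → Fin 4 → Fin 4 → A := fun c μ ν =>
       (minkEta μ : ℂ) • d μ (v c ν) - (minkEta ν : ℂ) • d ν (v c μ)
     let T : A := ∑ a, ∑ b, ∑ c, (f a b c : ℂ) •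
       ((1 / 2 : ℂ) • (∑ μ, ∑ ν, ((minkEta μ : ℂ) * (minkEta ν : ℂ)) •
           (v a μ * v b ν * Fup c ν μ)) +
         ∑ μ, u a * v b μ * d μ (ut c))
     let Tmu : Fin 4 → A := fun μ => ∑ a, ∑ b, ∑ c, (f a b c : ℂ) •
       ((∑ ν, (minkEta ν : ℂ) • (u a * v b ν * Fup c ν μ)) -
         (1 / 2 : ℂ) • ((minkEta μ : ℂ) • (u a * u b * d μ (ut c))))
     let Tmunu : Fin 4 → Fin 4 → A := fun μ ν => ∑ a, ∑ b, ∑ c, (f a b c : ℂ) •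
       ((1 / 2 : ℂ) • (u a * u b * Fup c μ ν))
     dQ T = Complex.I • ∑ μ, d μ (Tmu μ) ∧
       (∀ μ, dQ (Tmu μ) = Complex.I • ∑ ν, d ν (Tmunu μ ν)) ∧
       (∀ μ ν, dQ (Tmunu μ ν) = 0)) := by
  
  intro Fup T Tmu Tmunu
  have hdQd' : ∀ (μ : Fin 4) (x : A), dQ (d μ x) = d μ (dQ x) := fun μ x =>
    LinearMap.congr_fun (hdQd μ) x
  have hdd' : ∀ (μ ν : Fin 4) (x : A), d μ (d ν x) = d ν (d μ x) := by
    intro μ ν x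
    have h := LinearMap.congr_fun (hdd μ ν).eq x
    simpa [Module.End.mul_apply] using h
  have hdQF : ∀ (c : Fin r) (μ ν : Fin 4), dQ (Fup c μ ν) = 0 := by
    intro c μ ν
    simp only [Fup, map_sub, map_smul, hdQd', hdQv]
    rw [hdd' μ ν]
    module
  have hdQuu : ∀ a b : Fin r, dQ (u a * u b) = 0 := by
    intro a b
    rw [hdQod _ (hu a), hdQu, hdQu, zero_mul, mul_zero, sub_zero]

  have Fanti : ∀ (c : Fin r) (μ ν : Fin 4), Fup c μ ν = -(Fup c ν μ) := by
    intro c μ ν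
    simp only [Fup, neg_sub]
  have hdivF : ∀ (c : Fin r) (μ : Fin 4),
      ∑ ν, d ν (Fup c μ ν) = (minkEta μ : ℂ) • ∑ l, d μ (d l (v c l)) := by
    intro c μ
    simp only [Fup, map_sub, map_smul]
    rw [Finset.sum_sub_distrib, eomv c μ, sub_zero, ← Finset.smul_sum]
    congr 1
    exact Finset.sum_congr rfl fun ν _ => hdd' ν μ _
  have e1 : ∀ (a b c : Fin r) (ν μ : Fin 4), dQ (u a * v b ν * Fup c ν μ)
      = -((minkEta ν : ℂ) • (Complex.I • (u a * d ν (u b) * Fup c ν μ))) := by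
    intro a b c ν μ
    rw [hdQod _ (hodev _ (hu a) _ (hv b ν)), hdQF, mul_zero, sub_zero,
        hdQod _ (hu a), hdQu, zero_mul, zero_sub, hdQv]
    simp only [mul_smul_comm, smul_mul_assoc, neg_mul]
  have e2 : ∀ (a b c : Fin r) (μ : Fin 4), dQ (u a * u b * d μ (ut c))
      = -(Complex.I • (u a * u b * ∑ l, d μ (d l (v c l)))) := by
    intro a b c μ
    rw [hdQev _ (hodod _ (hu a) _ (hu b)), hdQuu, zero_mul, zero_add, hdQd', hdQut,
        map_neg, map_smul, map_sum, mul_neg, mul_smul_comm]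
  refine ⟨?_, ?_, ?_⟩
  · -- part 1
    have scal : ∀ (m n : Fin 4) (P Q : A),
        ((minkEta m:ℂ)*(minkEta n:ℂ)) • ((minkEta m:ℂ) • P + (minkEta n:ℂ) • Q)
          = (minkEta n:ℂ) • P + (minkEta m:ℂ) • Q := by
      intro m n P Q
      have h1 : ((minkEta m:ℂ)*(minkEta n:ℂ)) * (minkEta m:ℂ) = (minkEta n:ℂ) := by
        rw [mul_comm ((minkEta m:ℂ)) ((minkEta n:ℂ)), mul_assoc, DescentAux.etaSq, mul_one]
      have h2 : ((minkEta m:ℂ)*(minkEta n:ℂ)) * (minkEta n:ℂ) = (minkEta m:ℂ) := by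
        rw [mul_assoc, DescentAux.etaSq, mul_one]
      rw [smul_add, smul_smul, smul_smul, h1, h2]
    have e4 : ∀ (a b c : Fin r) (m n : Fin 4), dQ (v a m * v b n * Fup c n m)
        = (minkEta m:ℂ) • (Complex.I • (d m (u a) * v b n * Fup c n m))
          + (minkEta n:ℂ) • (Complex.I • (v a m * d n (u b) * Fup c n m)) := by
      intro a b c m n
      rw [hdQev _ (hevev _ (hv a m) _ (hv b n)), hdQF, mul_zero, add_zero,
          hdQev _ (hv a m), hdQv, hdQv, add_mul]
      simp only [smul_mul_assoc, mul_smul_comm]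
    have e5 : ∀ (a b c : Fin r) (m : Fin 4), dQ (u a * v b m * d m (ut c))
        = -((minkEta m:ℂ) • (Complex.I • (u a * d m (u b) * d m (ut c))))
          + Complex.I • (u a * v b m * ∑ l, d m (d l (v c l))) := by
      intro a b c m
      rw [hdQod _ (hodev _ (hu a) _ (hv b m)), hdQod _ (hu a), hdQu, zero_mul, zero_sub,
          hdQv, hdQd', hdQut, map_neg, map_smul, map_sum]
      simp only [mul_smul_comm, smul_mul_assoc, neg_mul, mul_neg, sub_neg_eq_add]
    have hL1 : dQ T = ∑ a, ∑ b, ∑ c, (f a b c : ℂ) •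
        ((1/2:ℂ) • (∑ m, ∑ n, (minkEta n:ℂ) • (Complex.I • (d m (u a) * v b n * Fup c n m)))
         + (1/2:ℂ) • (∑ m, ∑ n, (minkEta m:ℂ) • (Complex.I • (v a m * d n (u b) * Fup c n m)))
         + (-(∑ m, (minkEta m:ℂ) • (Complex.I • (u a * d m (u b) * d m (ut c)))))
         + (∑ m, Complex.I • (u a * v b m * ∑ l, d m (d l (v c l))))) := by
      simp only [T, map_sum, map_smul, map_add]
      refine Finset.sum_congr rfl fun a _ => Finset.sum_congr rfl fun b _ =>
        Finset.sum_congr rfl fun c _ => ?_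
      congr 1
      simp only [e4, scal, e5, smul_add, Finset.sum_add_distrib, Finset.sum_neg_distrib]
      abel
    have pullIn : ∀ (g : Fin 4 → A) (sc : Fin 4 → ℂ),
        Complex.I • (∑ n, sc n • g n) = ∑ n, sc n • (Complex.I • g n) := by
      intro g sc
      rw [Finset.smul_sum]
      exact Finset.sum_congr rfl fun n _ => smul_comm _ _ _
    have pullX : ∀ (X : A) (g : Fin 4 → A),
        (∑ m, (minkEta m:ℂ) • (Complex.I • (X * g m)))
          = Complex.I • (X * ∑ m, (minkEta m:ℂ) • g m) := by
      intro X g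
      rw [Finset.mul_sum, Finset.smul_sum]
      refine Finset.sum_congr rfl fun m _ => ?_
      rw [mul_smul_comm, smul_comm]
    have hR1 : Complex.I • ∑ m, d m (Tmu m) = ∑ a, ∑ b, ∑ c, (f a b c : ℂ) •
        ((∑ m, ∑ n, (minkEta n:ℂ) • (Complex.I • (d m (u a) * v b n * Fup c n m)))
         + (∑ m, ∑ n, (minkEta n:ℂ) • (Complex.I • (u a * d m (v b n) * Fup c n m)))
         + (∑ m, Complex.I • (u a * v b m * ∑ l, d m (d l (v c l))))
         + (-(1/2:ℂ)) • (∑ m, (minkEta m:ℂ) • (Complex.I • (d m (u a) * u b * d m (ut c))))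
         + (-(1/2:ℂ)) • (∑ m, (minkEta m:ℂ) • (Complex.I • (u a * d m (u b) * d m (ut c))))) := by
      simp only [Tmu, map_sum, map_smul, map_sub, Finset.smul_sum]
      rw [Finset.sum_comm]
      refine Finset.sum_congr rfl fun a _ => ?_
      rw [Finset.sum_comm]
      refine Finset.sum_congr rfl fun b _ => ?_
      rw [Finset.sum_comm]
      refine Finset.sum_congr rfl fun c _ => ?_
      have pull3 : ∀ (g : Fin 4 → A),
          (∑ m, Complex.I • ((f a b c:ℂ) • g m)) = (f a b c:ℂ) • ∑ m, Complex.I • g m := by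
        intro g
        simp only [smul_smul, ← Finset.smul_sum]
        congr 1
        ring
      rw [pull3]
      congr 1
      have ex1 : ∀ m n : Fin 4, d m (u a * v b n * Fup c n m)
          = d m (u a) * v b n * Fup c n m + u a * d m (v b n) * Fup c n m
            + u a * v b n * d m (Fup c n m) := by
        intro m n; rw [hdLeib, hdLeib, add_mul]
      have ex2 : ∀ m : Fin 4, d m (u a * u b * d m (ut c))
          = d m (u a) * u b * d m (ut c) + u a * d m (u b) * d m (ut c)
            + u a * u b * d m (d m (ut c)) := by
        intro m; rw [hdLeib, hdLeib, add_mul]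
      simp only [ex1, ex2, smul_add, smul_sub, Finset.sum_add_distrib, Finset.sum_sub_distrib,
        pullIn]
      have h3 : (∑ x : Fin 4, ∑ n : Fin 4, (minkEta n:ℂ) • Complex.I • (u a * v b n * d x (Fup c n x)))
          = ∑ m : Fin 4, Complex.I • (u a * v b m * ∑ l : Fin 4, d m (d l (v c l))) := by
        rw [Finset.sum_comm]
        refine Finset.sum_congr rfl fun n _ => ?_
        rw [← Finset.smul_sum, ← Finset.smul_sum, ← Finset.mul_sum, hdivF c n,
          mul_smul_comm, smul_comm Complex.I, smul_smul, DescentAux.etaSq, one_smul]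
      have h4 : (∑ x : Fin 4, Complex.I • (1/2:ℂ) • (minkEta x:ℂ) • (u a * u b * d x (d x (ut c)))) = 0 := by
        have hh : ∀ x : Fin 4, Complex.I • (1/2:ℂ) • (minkEta x:ℂ) • (u a * u b * d x (d x (ut c)))
            = (1/2:ℂ) • ((minkEta x:ℂ) • (Complex.I • (u a * u b * d x (d x (ut c))))) := by
          intro x; module
        simp only [hh]
        rw [← Finset.smul_sum, pullX, eomut, mul_zero, smul_zero, smul_zero]
      rw [h3, h4, add_zero, sub_eq_add_neg, neg_add]
      have h5 : -(∑ x : Fin 4, Complex.I • (1/2:ℂ) • (minkEta x:ℂ) • (d x (u a) * u b * d x (ut c)))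
          = ∑ x : Fin 4, (-(1/2:ℂ)) • (minkEta x:ℂ) • Complex.I • (d x (u a) * u b * d x (ut c)) := by
        rw [← Finset.sum_neg_distrib]
        refine Finset.sum_congr rfl fun x _ => ?_
        module
      have h6 : -(∑ x : Fin 4, Complex.I • (1/2:ℂ) • (minkEta x:ℂ) • (u a * d x (u b) * d x (ut c)))
          = ∑ x : Fin 4, (-(1/2:ℂ)) • (minkEta x:ℂ) • Complex.I • (u a * d x (u b) * d x (ut c)) := by
        rw [← Finset.sum_neg_distrib]
        refine Finset.sum_congr rfl fun x _ => ?_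
        module
      rw [h5, h6]
      abel
    rw [hL1, hR1]
    simp only [smul_add, Finset.sum_add_distrib]
    have hA21 : (∑ a, ∑ b, ∑ c, (f a b c:ℂ) •
          ((1/2:ℂ) • ∑ m : Fin 4, ∑ n : Fin 4, (minkEta m:ℂ) • Complex.I • (v a m * d n (u b) * Fup c n m)))
        = ∑ a, ∑ b, ∑ c, (f a b c:ℂ) •
          ((1/2:ℂ) • ∑ m : Fin 4, ∑ n : Fin 4, (minkEta n:ℂ) • Complex.I • (d m (u a) * v b n * Fup c n m)) := by
      rw [DescentAux.swapAB f hf1 (fun a b c =>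
        (1/2:ℂ) • ∑ m : Fin 4, ∑ n : Fin 4, (minkEta m:ℂ) • Complex.I • (v a m * d n (u b) * Fup c n m))]
      refine Finset.sum_congr rfl fun a _ => Finset.sum_congr rfl fun b _ =>
        Finset.sum_congr rfl fun c _ => ?_
      congr 1
      have step : ∀ m n : Fin 4, v b m * d n (u a) * Fup c n m
          = -(d n (u a) * v b m * Fup c m n) := by
        intro m n
        rw [(hcomm _ (hv b m) (d n (u a))).eq, Fanti c n m, mul_neg]
      simp only [step, smul_neg, Finset.sum_neg_distrib, neg_neg]
      rw [Finset.sum_comm]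
    have hB1 : (∑ a, ∑ b, ∑ c, (f a b c:ℂ) •
            ((1/2:ℂ) • ∑ m : Fin 4, ∑ n : Fin 4, (minkEta n:ℂ) • Complex.I • (d m (u a) * v b n * Fup c n m)))
          + (∑ a, ∑ b, ∑ c, (f a b c:ℂ) •
            ((1/2:ℂ) • ∑ m : Fin 4, ∑ n : Fin 4, (minkEta n:ℂ) • Complex.I • (d m (u a) * v b n * Fup c n m)))
        = ∑ a, ∑ b, ∑ c, (f a b c:ℂ) •
            (∑ m : Fin 4, ∑ n : Fin 4, (minkEta n:ℂ) • Complex.I • (d m (u a) * v b n * Fup c n m)) := by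
      simp only [← Finset.sum_add_distrib, ← smul_add]
      refine Finset.sum_congr rfl fun a _ => Finset.sum_congr rfl fun b _ =>
        Finset.sum_congr rfl fun c _ => ?_
      congr 1
      simp only [← two_smul ℂ, smul_smul, Finset.smul_sum]
      refine Finset.sum_congr rfl fun m _ => Finset.sum_congr rfl fun n _ => ?_
      congr 1
      ring
    have hB45 : (∑ a, ∑ b, ∑ c, (f a b c:ℂ) •
          ((-(1/2:ℂ)) • ∑ m : Fin 4, (minkEta m:ℂ) • Complex.I • (d m (u a) * u b * d m (ut c))))
        = ∑ a, ∑ b, ∑ c, (f a b c:ℂ) •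
          ((-(1/2:ℂ)) • ∑ m : Fin 4, (minkEta m:ℂ) • Complex.I • (u a * d m (u b) * d m (ut c))) := by
      rw [DescentAux.swapAB f hf1 (fun a b c =>
        (-(1/2:ℂ)) • ∑ m : Fin 4, (minkEta m:ℂ) • Complex.I • (d m (u a) * u b * d m (ut c)))]
      refine Finset.sum_congr rfl fun a _ => Finset.sum_congr rfl fun b _ =>
        Finset.sum_congr rfl fun c _ => ?_
      congr 1
      have step : ∀ m : Fin 4, d m (u b) * u a = -(u a * d m (u b)) :=
        fun m => hanti _ (hdod m _ (hu b)) _ (hu a)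
      simp only [step, neg_mul, smul_neg, Finset.sum_neg_distrib, neg_neg]
    have hA3 : (∑ a, ∑ b, ∑ c, (f a b c:ℂ) •
            ((-(1/2:ℂ)) • ∑ m : Fin 4, (minkEta m:ℂ) • Complex.I • (u a * d m (u b) * d m (ut c))))
          + (∑ a, ∑ b, ∑ c, (f a b c:ℂ) •
            ((-(1/2:ℂ)) • ∑ m : Fin 4, (minkEta m:ℂ) • Complex.I • (u a * d m (u b) * d m (ut c))))
        = ∑ a, ∑ b, ∑ c, (f a b c:ℂ) •
            (-∑ m : Fin 4, (minkEta m:ℂ) • Complex.I • (u a * d m (u b) * d m (ut c))) := by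
      simp only [← Finset.sum_add_distrib, ← smul_add]
      refine Finset.sum_congr rfl fun a _ => Finset.sum_congr rfl fun b _ =>
        Finset.sum_congr rfl fun c _ => ?_
      congr 1
      simp only [← two_smul ℂ, smul_smul, Finset.smul_sum]
      rw [← Finset.sum_neg_distrib]
      refine Finset.sum_congr rfl fun m _ => ?_
      rw [← neg_smul]
      congr 1
      ring
    have per : ∀ (a b c : Fin r) (m n : Fin 4),
        (minkEta n:ℂ) • Complex.I • (u a * d m (v b n) * Fup c n m)
          = Complex.I • (u a * (d m (v b n) * d n (v c m)))
            - ((minkEta n:ℂ)*(minkEta m:ℂ)) • (Complex.I • (u a * (d m (v b n) * d m (v c n)))) := by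
      intro a b c m n
      simp only [Fup]
      rw [mul_sub, mul_smul_comm, mul_smul_comm, smul_sub, smul_sub]
      simp only [mul_assoc]
      congr 1
      · rw [smul_comm Complex.I, smul_smul, DescentAux.etaSq, one_smul]
      · rw [smul_comm Complex.I, smul_smul]
    have expandG : ∀ a b c : Fin r,
        (∑ m : Fin 4, ∑ n : Fin 4, (minkEta n:ℂ) • Complex.I • (u a * d m (v b n) * Fup c n m))
          = (∑ m : Fin 4, ∑ n : Fin 4, Complex.I • (u a * (d m (v b n) * d n (v c m))))
            - ∑ m : Fin 4, ∑ n : Fin 4, ((minkEta n:ℂ)*(minkEta m:ℂ)) • (Complex.I • (u a * (d m (v b n) * d m (v c n)))) := by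
      intro a b c
      simp only [per, Finset.sum_sub_distrib]
    have hK1 : ∀ a b c : Fin r,
        (∑ m : Fin 4, ∑ n : Fin 4, Complex.I • (u a * (d m (v c n) * d n (v b m))))
          = ∑ m : Fin 4, ∑ n : Fin 4, Complex.I • (u a * (d m (v b n) * d n (v c m))) := by
      intro a b c
      rw [Finset.sum_comm]
      refine Finset.sum_congr rfl fun m _ => Finset.sum_congr rfl fun n _ => ?_
      rw [(hcomm _ (hdev n _ (hv c m)) (d m (v b n))).eq]
    have hK2 : ∀ a b c : Fin r,
        (∑ m : Fin 4, ∑ n : Fin 4, ((minkEta n:ℂ)*(minkEta m:ℂ)) • (Complex.I • (u a * (d m (v c n) * d m (v b n)))))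
          = ∑ m : Fin 4, ∑ n : Fin 4, ((minkEta n:ℂ)*(minkEta m:ℂ)) • (Complex.I • (u a * (d m (v b n) * d m (v c n)))) := by
      intro a b c
      refine Finset.sum_congr rfl fun m _ => Finset.sum_congr rfl fun n _ => ?_
      rw [(hcomm _ (hdev m _ (hv c n)) (d m (v b n))).eq]
    have hB2 : (∑ a, ∑ b, ∑ c, (f a b c:ℂ) •
          (∑ m : Fin 4, ∑ n : Fin 4, (minkEta n:ℂ) • Complex.I • (u a * d m (v b n) * Fup c n m))) = 0 := by
      refine DescentAux.halfCancel _ ?_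
      nth_rewrite 1 [DescentAux.swapBC f hf2 (fun a b c =>
        ∑ m : Fin 4, ∑ n : Fin 4, (minkEta n:ℂ) • Complex.I • (u a * d m (v b n) * Fup c n m))]
      rw [← Finset.sum_neg_distrib]
      refine Finset.sum_congr rfl fun a _ => ?_
      rw [← Finset.sum_neg_distrib]
      refine Finset.sum_congr rfl fun b _ => ?_
      rw [← Finset.sum_neg_distrib]
      refine Finset.sum_congr rfl fun c _ => ?_
      rw [← smul_neg]
      congr 1
      rw [neg_inj, expandG a c b, expandG a b c, hK1 a b c, hK2 a b c]
    rw [hA21, hB2, hB45, ← hB1, ← hA3]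
    abel
  · -- part 2
    intro μ
    have hL : dQ (Tmu μ) = ∑ a, ∑ b, ∑ c, (f a b c : ℂ) •
        (-(Complex.I • ∑ ν, u a * d ν (u b) * Fup c ν μ)
          + (1/2:ℂ) • ((minkEta μ:ℂ) • (Complex.I • (u a * u b * ∑ l, d μ (d l (v c l)))))) := by
      simp only [Tmu, map_sum, map_smul, map_sub]
      refine Finset.sum_congr rfl fun a _ => Finset.sum_congr rfl fun b _ =>
        Finset.sum_congr rfl fun c _ => ?_
      congr 1
      rw [e2 a b c μ]
      have e1' : ∀ ν : Fin 4, (minkEta ν:ℂ) • dQ (u a * v b ν * Fup c ν μ)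
          = -(Complex.I • (u a * d ν (u b) * Fup c ν μ)) := by
        intro ν
        rw [e1, smul_neg, smul_smul, DescentAux.etaSq, one_smul]
      simp only [e1']
      rw [Finset.sum_neg_distrib, ← Finset.smul_sum]
      module
    have pull : ∀ (g : Fin 4 → A) (s : ℂ), (∑ ν, Complex.I • (s • ((1/2:ℂ) • g ν)))
        = s • ((1/2:ℂ) • (Complex.I • ∑ ν, g ν)) := by
      intro g s
      simp only [smul_smul, ← Finset.smul_sum]
      congr 1
      ring
    have hR : Complex.I • ∑ ν, d ν (Tmunu μ ν) = ∑ a, ∑ b, ∑ c, (f a b c : ℂ) •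
        ((1/2:ℂ) • (Complex.I • ∑ ν, d ν (u a) * u b * Fup c μ ν)
         + (1/2:ℂ) • (Complex.I • ∑ ν, u a * d ν (u b) * Fup c μ ν)
         + (1/2:ℂ) • ((minkEta μ:ℂ) • (Complex.I • (u a * u b * ∑ l, d μ (d l (v c l)))))) := by
      simp only [Tmunu, map_sum, map_smul, Finset.smul_sum]
      rw [Finset.sum_comm]
      refine Finset.sum_congr rfl fun a _ => ?_
      rw [Finset.sum_comm]
      refine Finset.sum_congr rfl fun b _ => ?_
      rw [Finset.sum_comm]
      refine Finset.sum_congr rfl fun c _ => ?_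
      have expand : ∀ ν : Fin 4, d ν (u a * u b * Fup c μ ν)
          = d ν (u a) * u b * Fup c μ ν + u a * d ν (u b) * Fup c μ ν
            + u a * u b * d ν (Fup c μ ν) := by
        intro ν
        rw [hdLeib, hdLeib, add_mul]
      simp only [expand, smul_add, Finset.sum_add_distrib]
      rw [pull, pull, pull, ← Finset.mul_sum, hdivF, mul_smul_comm]
      simp only [← Finset.smul_sum]
      module
    rw [hL, hR]
    have hswap : (∑ a, ∑ b, ∑ c, (f a b c:ℂ) •
          ((1/2:ℂ) • (Complex.I • ∑ ν, d ν (u a) * u b * Fup c μ ν)))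
        = ∑ a, ∑ b, ∑ c, (f a b c:ℂ) •
          ((1/2:ℂ) • (Complex.I • ∑ ν, u a * d ν (u b) * Fup c μ ν)) := by
      rw [DescentAux.swapAB f hf1
        (fun a b c => (1/2:ℂ) • (Complex.I • ∑ ν, d ν (u a) * u b * Fup c μ ν))]
      refine Finset.sum_congr rfl fun a _ => Finset.sum_congr rfl fun b _ =>
        Finset.sum_congr rfl fun c _ => ?_
      congr 1
      simp only [show ∀ ν : Fin 4, d ν (u b) * u a = -(u a * d ν (u b)) from
          fun ν => hanti _ (hdod ν _ (hu b)) _ (hu a),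
        neg_mul, Finset.sum_neg_distrib, smul_neg, neg_neg]
    have hflip : ∀ a b c : Fin r, (∑ ν, u a * d ν (u b) * Fup c ν μ)
        = -∑ ν, u a * d ν (u b) * Fup c μ ν := by
      intro a b c
      rw [← Finset.sum_neg_distrib]
      refine Finset.sum_congr rfl fun ν _ => ?_
      rw [Fanti c ν μ, mul_neg]
    simp only [smul_add, Finset.sum_add_distrib]
    rw [hswap]
    simp only [hflip, smul_neg, neg_neg]
    simp only [← Finset.sum_add_distrib, ← smul_add]
    refine Finset.sum_congr rfl fun a _ => Finset.sum_congr rfl fun b _ =>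
      Finset.sum_congr rfl fun c _ => ?_
    congr 1
    rw [Finset.sum_add_distrib]
    module
  · -- part 3
    intro μ ν
    simp only [Tmunu, map_sum, map_smul]
    refine Finset.sum_eq_zero fun a _ => Finset.sum_eq_zero fun b _ =>
      Finset.sum_eq_zero fun c _ => ?_
    rw [hdQev _ (hodod _ (hu a) _ (hu b)), hdQuu, hdQF]
    simp
end

section
/- Define the Wick submonomials B_{aμ} = −f_{abc} u_b v_{cμ}, C_{aμ} = f_{abc}(v_b^ν F_{cνμ} − u_b ∂_μ ũ_c), D_a = f_{abc} v_b^μ ∂_μ ũ_c, E_{aμν} = f_{abc} v_{bμ} v_{cν}, C_{aνμ}' = −f_{abc} u_b F_{cνμ}, and B_a = (1/2) f_{abc} u_b u_c. Then modulo equations of motion: d_Q B_a^μ = i ∂^μ B_a, d_Q D_a = −i ∂_μ C_a^μ, d_Q C_a^μ = i ∂_ν C_a'^{μν}, d_Q E_a^{μν} = i(∂^ν B_a^μ − ∂^μ B_a^ν + C_a'^{μν}), d_Q B_a = 0, and d_Q C_a'^{μν} = 0. -/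
open scoped BigOperators

private lemma selfNeg {M : Type*} [AddCommGroup M] [Module ℂ M] (S : M) (h : S = -S) :
    S = 0 := by
  rw [eq_neg_iff_add_eq_zero, ← two_smul ℂ] at h
  have := congrArg (fun x => (2⁻¹ : ℂ) • x) h
  simpa [smul_smul] using this

private lemma sumSwap {r : ℕ} {M : Type*} [AddCommGroup M] [Module ℂ M]
    (F : Fin r → Fin r → ℂ) (hF : ∀ b c, F b c = - F c b) (g : Fin r → Fin r → M) :
    ∑ b, ∑ c, F b c • g b c = - ∑ b, ∑ c, F b c • g c b := by
  have key : ∀ (x y : Fin r), F x y • g x y = -(F y x • g x y) := fun x y => by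
    rw [hF x y, neg_smul]
  calc ∑ b, ∑ c, F b c • g b c = ∑ c, ∑ b, F b c • g b c := Finset.sum_comm
    _ = - ∑ c, ∑ b, F c b • g b c := by
        simp_rw [key]; simp

private lemma sumSym {r : ℕ} {M : Type*} [AddCommGroup M] [Module ℂ M]
    (F : Fin r → Fin r → ℂ) (hF : ∀ b c, F b c = - F c b) (g : Fin r → Fin r → M)
    (hg : ∀ b c, g b c = g c b) :
    ∑ b, ∑ c, F b c • g b c = 0 := by
  refine selfNeg _ ?_
  conv_lhs => rw [sumSwap F hF g]
  simp_rw [hg]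
private lemma pullSmul {r : ℕ} {M : Type*} [AddCommGroup M] [Module ℂ M]
    (F : Fin r → Fin r → ℂ) (s : ℂ) (g : Fin r → Fin r → M) :
    ∑ b, ∑ c, F b c • (s • g b c) = s • ∑ b, ∑ c, F b c • g b c := by
  rw [Finset.smul_sum]
  refine Finset.sum_congr rfl fun b _ => ?_
  rw [Finset.smul_sum]
  exact Finset.sum_congr rfl fun c _ => smul_comm _ _ _

private lemma sumComm3 {r : ℕ} {M : Type*} [AddCommGroup M] [Module ℂ M]
    (F : Fin r → Fin r → ℂ) (g : Fin r → Fin r → Fin 4 → M) :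
    ∑ (ν : Fin 4), ∑ b, ∑ c, F b c • g b c ν = ∑ b, ∑ c, F b c • ∑ ν, g b c ν := by
  rw [Finset.sum_comm]
  refine Finset.sum_congr rfl fun b _ => ?_
  rw [Finset.sum_comm]
  refine Finset.sum_congr rfl fun c _ => ?_
  rw [Finset.smul_sum]

private lemma assemble {r : ℕ} {M : Type*} [AddCommGroup M] [Module ℂ M]
    (F : Fin r → Fin r → ℂ) (hF : ∀ b c, F b c = -F c b)
    (SA S2 S3 : Fin r → Fin r → M) (hSA : ∀ b c, SA b c = SA c b) :
    ∑ b, ∑ c, F b c • (Complex.I • S3 b c - Complex.I • S2 b c)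
      = -(Complex.I • ∑ b, ∑ c, F b c • (SA b c + S2 b c - S3 b c)) := by
  simp_rw [smul_sub, smul_add, Finset.sum_sub_distrib, Finset.sum_add_distrib]
  rw [sumSym F hF SA hSA, pullSmul F Complex.I S3, pullSmul F Complex.I S2]
  module

/-- in the graded jet algebra of pure Yang-Mills (same setting as for the
descent equations), the Wick submonomials
`B_a^μ = −f_{abc} u_b v_c^μ`, `C_a^μ = f_{abc}(v_b^ν F_{cν}{}^μ − u_b ∂^μ ũ_c)`,
`D_a = f_{abc} v_b^μ ∂_μ ũ_c`, `E_a^{μν} = f_{abc} v_b^μ v_c^ν`,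
`C'_a^{μν} = −f_{abc} u_b F_c^{μν}`, `B_a = (1/2) f_{abc} u_b u_c`
satisfy, modulo the equations of motion:
`d_Q B_a^μ = i∂^μ B_a`, `d_Q D_a = −i∂_μ C_a^μ`, `d_Q C_a^μ = i∂_ν C'_a^{μν}`,
`d_Q E_a^{μν} = i(∂^ν B_a^μ − ∂^μ B_a^ν + C'_a^{μν})`, `d_Q B_a = 0`,
`d_Q C'_a^{μν} = 0`. -/
theorem wick_submonomials_descent
    {r : ℕ} {A : Type*} [Ring A] [Algebra ℂ A]
    (f : Fin r → Fin r → Fin r → ℝ)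
    (hf1 : ∀ a b c, f a b c = - f b a c)
    (hf2 : ∀ a b c, f a b c = - f a c b)
    (ev od : Set A)
    (hevev : ∀ x ∈ ev, ∀ y ∈ ev, x * y ∈ ev)
    (hodod : ∀ x ∈ od, ∀ y ∈ od, x * y ∈ ev)
    (hevod : ∀ x ∈ ev, ∀ y ∈ od, x * y ∈ od)
    (hodev : ∀ x ∈ od, ∀ y ∈ ev, x * y ∈ od)
    (hcomm : ∀ x ∈ ev, ∀ y : A, Commute x y)
    (hanti : ∀ x ∈ od, ∀ y ∈ od, x * y = -(y * x))
    (d : Fin 4 → Module.End ℂ A)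
    (hdLeib : ∀ (μ : Fin 4) (x y : A), d μ (x * y) = d μ x * y + x * d μ y)
    (hdd : ∀ μ ν, Commute (d μ) (d ν))
    (hdev : ∀ μ, ∀ x ∈ ev, d μ x ∈ ev)
    (hdod : ∀ μ, ∀ x ∈ od, d μ x ∈ od)
    (dQ : Module.End ℂ A)
    (hdQev : ∀ x ∈ ev, ∀ y : A, dQ (x * y) = dQ x * y + x * dQ y)
    (hdQod : ∀ x ∈ od, ∀ y : A, dQ (x * y) = dQ x * y - x * dQ y)
    (hdQd : ∀ μ, dQ ∘ₗ d μ = d μ ∘ₗ dQ)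
    (v : Fin r → Fin 4 → A) (u ut : Fin r → A)
    (hv : ∀ a μ, v a μ ∈ ev) (hu : ∀ a, u a ∈ od) (hut : ∀ a, ut a ∈ od)
    (hdQv : ∀ a μ, dQ (v a μ) = (minkEta μ : ℂ) • (Complex.I • d μ (u a)))
    (hdQu : ∀ a, dQ (u a) = 0)
    (hdQut : ∀ a, dQ (ut a) = -(Complex.I • ∑ μ, d μ (v a μ)))
    (eomv : ∀ a ν, ∑ μ, (minkEta μ : ℂ) • d μ (d μ (v a ν)) = 0)
    (eomu : ∀ a, ∑ μ, (minkEta μ : ℂ) • d μ (d μ (u a)) = 0)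
    (eomut : ∀ a, ∑ μ, (minkEta μ : ℂ) • d μ (d μ (ut a)) = 0) :
    (let Fup : Fin r → Fin 4 → Fin 4 → A := fun c μ ν =>
       (minkEta μ : ℂ) • d μ (v c ν) - (minkEta ν : ℂ) • d ν (v c μ)
     let Bsc : Fin r → A := fun a =>
       (1 / 2 : ℂ) • ∑ b, ∑ c, (f a b c : ℂ) • (u b * u c)
     let Bup : Fin r → Fin 4 → A := fun a μ =>
       - ∑ b, ∑ c, (f a b c : ℂ) • (u b * v c μ)
     let Cup : Fin r → Fin 4 → A := fun a μ =>
       ∑ b, ∑ c, (f a b c : ℂ) •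
         ((∑ ν, (minkEta ν : ℂ) • (v b ν * Fup c ν μ)) -
           (minkEta μ : ℂ) • (u b * d μ (ut c)))
     let Dg : Fin r → A := fun a =>
       ∑ b, ∑ c, (f a b c : ℂ) • ∑ μ, v b μ * d μ (ut c)
     let Eup : Fin r → Fin 4 → Fin 4 → A := fun a μ ν =>
       ∑ b, ∑ c, (f a b c : ℂ) • (v b μ * v c ν)
     let C' : Fin r → Fin 4 → Fin 4 → A := fun a μ ν =>
       - ∑ b, ∑ c, (f a b c : ℂ) • (u b * Fup c μ ν)
     (∀ a μ, dQ (Bup a μ) = Complex.I • ((minkEta μ : ℂ) • d μ (Bsc a))) ∧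
     (∀ a, dQ (Dg a) = -(Complex.I • ∑ μ, d μ (Cup a μ))) ∧
     (∀ a μ, dQ (Cup a μ) = Complex.I • ∑ ν, d ν (C' a μ ν)) ∧
     (∀ a μ ν, dQ (Eup a μ ν) = Complex.I •
        ((minkEta ν : ℂ) • d ν (Bup a μ) - (minkEta μ : ℂ) • d μ (Bup a ν) + C' a μ ν)) ∧
     (∀ a, dQ (Bsc a) = 0) ∧
     (∀ a μ ν, dQ (C' a μ ν) = 0)) := by
  intro Fup Bsc Bup Cup Dg Eup C'
  have hdQd' : ∀ (μ : Fin 4) (x : A), dQ (d μ x) = d μ (dQ x) := fun μ x =>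
    LinearMap.congr_fun (hdQd μ) x
  have hdd' : ∀ (μ ν : Fin 4) (x : A), d μ (d ν x) = d ν (d μ x) := fun μ ν x =>
    LinearMap.congr_fun (hdd μ ν) x
  have ηsq : ∀ μ : Fin 4, (minkEta μ : ℂ) * (minkEta μ : ℂ) = 1 := by
    intro μ; fin_cases μ <;> norm_num [minkEta]
  have fA : ∀ (a b c : Fin r), ((f a b c : ℝ) : ℂ) = -((f a c b : ℝ) : ℂ) := fun a b c => by
    rw [hf2]; push_cast; ring
  have comm : ∀ x ∈ ev, ∀ y : A, x * y = y * x := fun x hx y => (hcomm x hx y)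
  have dQF : ∀ (c : Fin r) (μ ν : Fin 4), dQ (Fup c μ ν) = 0 := by
    intro c μ ν
    simp only [Fup, map_sub, map_smul, hdQd', hdQv, map_smul]
    rw [hdd' μ ν]
    module
  have Fanti : ∀ (c : Fin r) (μ ν : Fin 4), Fup c μ ν = -Fup c ν μ := by
    intro c μ ν; simp only [Fup]; abel
  refine ⟨?part1, ?part2, ?part3, ?part4, ?part5, ?part6⟩
  · -- part 1 : dQ Bup = i ∂^μ Bsc
    intro a μ
    have k1 : ∀ b c' : Fin r, dQ (u b * v c' μ) =
        -((((minkEta μ : ℝ) : ℂ) * Complex.I) • (u b * d μ (u c'))) := fun b c' => by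
      rw [hdQod _ (hu b), hdQu, hdQv, zero_mul, zero_sub, smul_smul, mul_smul_comm]
    have hS : ∑ b, ∑ c', ((f a b c' : ℝ) : ℂ) • (d μ (u b) * u c') =
        ∑ b, ∑ c', ((f a b c' : ℝ) : ℂ) • (u b * d μ (u c')) := by
      rw [sumSwap _ (fA a) (fun b c' => d μ (u b) * u c')]
      have hx : ∀ b c' : Fin r, u b * d μ (u c') = -(d μ (u c') * u b) := fun b c' =>
        hanti _ (hu b) _ (hdod μ _ (hu c'))
      simp_rw [hx, smul_neg]
      simp
    have pull : ∑ b, ∑ c', ((f a b c' : ℝ) : ℂ) •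
          ((((minkEta μ : ℝ) : ℂ) * Complex.I) • (u b * d μ (u c'))) =
        (((minkEta μ : ℝ) : ℂ) * Complex.I) •
          ∑ b, ∑ c', ((f a b c' : ℝ) : ℂ) • (u b * d μ (u c')) := by
      rw [Finset.smul_sum]
      refine Finset.sum_congr rfl fun b _ => ?_
      rw [Finset.smul_sum]
      exact Finset.sum_congr rfl fun c' _ => smul_comm _ _ _
    simp only [Bup, Bsc, map_neg, map_sum, map_smul]
    simp_rw [k1, hdLeib μ, smul_neg, smul_add, Finset.sum_add_distrib, Finset.sum_neg_distrib, neg_neg]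
    rw [pull, hS]
    module
  · -- part 2
    intro a
    have kL : ∀ b c' : Fin r, dQ (∑ μ, v b μ * d μ (ut c'))
        = Complex.I • (∑ μ, ((minkEta μ : ℝ) : ℂ) • (d μ (u b) * d μ (ut c')))
          - Complex.I • (∑ μ, ∑ ν, v b μ * d μ (d ν (v c' ν))) := by
      intro b c'
      have k : ∀ μ' : Fin 4, dQ (v b μ' * d μ' (ut c'))
          = Complex.I • (((minkEta μ' : ℝ) : ℂ) • (d μ' (u b) * d μ' (ut c')))
            - Complex.I • (∑ ν, v b μ' * d μ' (d ν (v c' ν))) := fun μ' => by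
        rw [hdQev _ (hv b μ'), hdQv, hdQd', hdQut, map_neg, map_smul, map_sum,
          smul_mul_assoc, smul_mul_assoc, mul_neg, mul_smul_comm, Finset.mul_sum]
        module
      rw [map_sum]
      simp_rw [k, Finset.sum_sub_distrib]
      rw [← Finset.smul_sum, ← Finset.smul_sum]
    have hL : dQ (Dg a) = ∑ b, ∑ c', ((f a b c' : ℝ) : ℂ) •
        (Complex.I • (∑ μ, ((minkEta μ : ℝ) : ℂ) • (d μ (u b) * d μ (ut c')))
          - Complex.I • (∑ μ, ∑ ν, v b μ * d μ (d ν (v c' ν)))) := by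
      simp only [Dg]
      rw [map_sum]
      refine Finset.sum_congr rfl fun b _ => ?_
      rw [map_sum]
      refine Finset.sum_congr rfl fun c' _ => ?_
      rw [map_smul, kL]
    have kR : ∀ b c' : Fin r, ∑ μ, d μ ((∑ ν, ((minkEta ν : ℝ) : ℂ) • (v b ν * Fup c' ν μ))
          - ((minkEta μ : ℝ) : ℂ) • (u b * d μ (ut c')))
        = (∑ μ, ∑ ν, ((minkEta ν : ℝ) : ℂ) • (d μ (v b ν) * Fup c' ν μ))
          + (∑ μ, ∑ ν, v b μ * d μ (d ν (v c' ν)))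
          - ∑ μ, ((minkEta μ : ℝ) : ℂ) • (d μ (u b) * d μ (ut c')) := by
      intro b c'
      have k1 : ∀ μ : Fin 4, d μ ((∑ ν, ((minkEta ν : ℝ) : ℂ) • (v b ν * Fup c' ν μ))
            - ((minkEta μ : ℝ) : ℂ) • (u b * d μ (ut c')))
          = ((∑ ν, ((minkEta ν : ℝ) : ℂ) • (d μ (v b ν) * Fup c' ν μ))
              + ∑ ν, ((minkEta ν : ℝ) : ℂ) • (v b ν * d μ (Fup c' ν μ)))
            - (((minkEta μ : ℝ) : ℂ) • (d μ (u b) * d μ (ut c'))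
              + ((minkEta μ : ℝ) : ℂ) • (u b * d μ (d μ (ut c')))) := fun μ => by
        rw [map_sub, map_sum, map_smul]
        simp_rw [map_smul, hdLeib μ, smul_add, Finset.sum_add_distrib]
      simp_rw [k1, Finset.sum_sub_distrib, Finset.sum_add_distrib]
      have hz : ∑ μ, ((minkEta μ : ℝ) : ℂ) • (u b * d μ (d μ (ut c'))) = 0 := by
        simp_rw [← mul_smul_comm]
        rw [← Finset.mul_sum, eomut, mul_zero]
      have hmid : ∑ μ, ∑ ν, ((minkEta ν : ℝ) : ℂ) • (v b ν * d μ (Fup c' ν μ))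
          = ∑ μ, ∑ ν, v b μ * d μ (d ν (v c' ν)) := by
        have e : ∀ μ ν : Fin 4, ((minkEta ν : ℝ) : ℂ) • (v b ν * d μ (Fup c' ν μ))
            = v b ν * d ν (d μ (v c' μ))
              - ((minkEta ν : ℝ) : ℂ) •
                (((minkEta μ : ℝ) : ℂ) • (v b ν * d μ (d μ (v c' ν)))) := fun μ ν => by
          simp only [Fup, map_sub, map_smul]
          rw [mul_sub, mul_smul_comm, mul_smul_comm, smul_sub, smul_smul, ηsq, one_smul,
            hdd' μ ν]
        simp_rw [e, Finset.sum_sub_distrib]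
        have z2 : ∑ μ, ∑ ν, ((minkEta ν : ℝ) : ℂ) •
            (((minkEta μ : ℝ) : ℂ) • (v b ν * d μ (d μ (v c' ν)))) = 0 := by
          rw [Finset.sum_comm]
          refine Finset.sum_eq_zero fun ν _ => ?_
          rw [← Finset.smul_sum]
          simp_rw [← mul_smul_comm]
          rw [← Finset.mul_sum, eomv, mul_zero, smul_zero]
        rw [z2, sub_zero]
        exact Finset.sum_comm
      rw [hmid, hz, add_zero]
    have hR : ∑ μ, d μ (Cup a μ) = ∑ b, ∑ c', ((f a b c' : ℝ) : ℂ) •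
        ((∑ μ, ∑ ν, ((minkEta ν : ℝ) : ℂ) • (d μ (v b ν) * Fup c' ν μ))
          + (∑ μ, ∑ ν, v b μ * d μ (d ν (v c' ν)))
          - ∑ μ, ((minkEta μ : ℝ) : ℂ) • (d μ (u b) * d μ (ut c'))) := by
      have h0 : ∀ μ : Fin 4, d μ (Cup a μ) = ∑ b, ∑ c', ((f a b c' : ℝ) : ℂ) •
          d μ ((∑ ν, ((minkEta ν : ℝ) : ℂ) • (v b ν * Fup c' ν μ))
            - ((minkEta μ : ℝ) : ℂ) • (u b * d μ (ut c'))) := fun μ => by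
        simp only [Cup, map_sum, map_smul]
      simp_rw [h0]
      rw [sumComm3 (fun b c' => ((f a b c' : ℝ) : ℂ))
        (fun b c' μ => d μ ((∑ ν, ((minkEta ν : ℝ) : ℂ) • (v b ν * Fup c' ν μ))
          - ((minkEta μ : ℝ) : ℂ) • (u b * d μ (ut c'))))]
      exact Finset.sum_congr rfl fun b _ => Finset.sum_congr rfl fun c' _ =>
        congrArg _ (kR b c')
    have hAsym : ∀ b c' : Fin r,
        (∑ μ, ∑ ν, ((minkEta ν : ℝ) : ℂ) • (d μ (v b ν) * Fup c' ν μ))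
          = ∑ μ, ∑ ν, ((minkEta ν : ℝ) : ℂ) • (d μ (v c' ν) * Fup b ν μ) := by
      intro b c'
      have e2 : ∀ (x y : Fin r) (μ ν : Fin 4),
          ((minkEta ν : ℝ) : ℂ) • (d μ (v x ν) * Fup y ν μ)
            = d μ (v x ν) * d ν (v y μ)
              - (((minkEta ν : ℝ) : ℂ) * ((minkEta μ : ℝ) : ℂ)) •
                (d μ (v x ν) * d μ (v y ν)) := fun x y μ ν => by
        simp only [Fup]
        rw [mul_sub, mul_smul_comm, mul_smul_comm, smul_sub, smul_smul, ηsq, one_smul,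
          smul_smul]
      simp_rw [e2, Finset.sum_sub_distrib]
      congr 1
      · rw [Finset.sum_comm]
        exact Finset.sum_congr rfl fun μ _ => Finset.sum_congr rfl fun ν _ =>
          comm _ (hdev _ _ (hv b _)) _
      · exact Finset.sum_congr rfl fun μ _ => Finset.sum_congr rfl fun ν _ => by
          rw [comm _ (hdev μ _ (hv b ν))]
    rw [hL, hR]
    exact assemble (fun b c => ((f a b c : ℝ) : ℂ)) (fA a)
      (fun b c' => ∑ μ, ∑ ν, ((minkEta ν : ℝ) : ℂ) • (d μ (v b ν) * Fup c' ν μ))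
      (fun b c' => ∑ μ, ∑ ν, v b μ * d μ (d ν (v c' ν)))
      (fun b c' => ∑ μ, ((minkEta μ : ℝ) : ℂ) • (d μ (u b) * d μ (ut c')))
      hAsym
  · -- part 3
    intro a μ
    have hηI : ∀ ν' : Fin 4, ((minkEta ν' : ℝ) : ℂ) * (((minkEta ν' : ℝ) : ℂ) * Complex.I)
        = Complex.I := fun ν' => by rw [← mul_assoc, ηsq, one_mul]
    have core : ∀ b c' : Fin r,
        dQ ((∑ ν, ((minkEta ν : ℝ) : ℂ) • (v b ν * Fup c' ν μ))
            - ((minkEta μ : ℝ) : ℂ) • (u b * d μ (ut c')))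
        = -(Complex.I • ∑ ν, (d ν (u b) * Fup c' μ ν + u b * d ν (Fup c' μ ν))) := by
      intro b c'
      have k1 : ∀ ν' : Fin 4, dQ (v b ν' * Fup c' ν' μ)
          = ((minkEta ν' : ℝ) : ℂ) • (Complex.I • (d ν' (u b) * Fup c' ν' μ)) := fun ν' => by
        rw [hdQev _ (hv b ν'), hdQv, dQF, mul_zero, add_zero, smul_mul_assoc, smul_mul_assoc]
      have k2 : dQ (u b * d μ (ut c')) = Complex.I • ∑ ν, (u b * d μ (d ν (v c' ν))) := by
        rw [hdQod _ (hu b), hdQu, zero_mul, zero_sub, hdQd', hdQut]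
        simp [map_neg, map_smul, map_sum, Finset.mul_sum, mul_smul_comm, Finset.smul_sum]
      have hG : ∀ ν' : Fin 4, d ν' (u b) * Fup c' μ ν' + u b * d ν' (Fup c' μ ν')
          = -(d ν' (u b) * Fup c' ν' μ)
            + (((minkEta μ : ℝ) : ℂ) • (u b * d μ (d ν' (v c' ν')))
              - ((minkEta ν' : ℝ) : ℂ) • (u b * d ν' (d ν' (v c' μ)))) := fun ν' => by
        rw [Fanti c' μ ν', mul_neg]
        congr 1
        simp only [Fup, map_neg, map_sub, map_smul, neg_sub]
        rw [mul_sub, mul_smul_comm, mul_smul_comm, hdd' ν' μ]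
      have hZ : ∑ ν, ((minkEta ν : ℝ) : ℂ) • (u b * d ν (d ν (v c' μ))) = 0 := by
        simp_rw [← mul_smul_comm]
        rw [← Finset.mul_sum, eomv, mul_zero]
      rw [map_sub, map_sum, map_smul, k2]
      simp_rw [map_smul, k1, smul_smul, hηI]
      simp_rw [hG, Finset.sum_add_distrib, Finset.sum_sub_distrib, Finset.sum_neg_distrib, hZ]
      rw [← Finset.smul_sum, ← Finset.smul_sum]
      module
    have hR : Complex.I • ∑ ν, d ν (C' a μ ν)
        = ∑ b, ∑ c', ((f a b c' : ℝ) : ℂ) •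
            (-(Complex.I • ∑ ν, (d ν (u b) * Fup c' μ ν + u b * d ν (Fup c' μ ν)))) := by
      have : ∀ ν : Fin 4, d ν (C' a μ ν)
          = -∑ b, ∑ c', ((f a b c' : ℝ) : ℂ) •
              (d ν (u b) * Fup c' μ ν + u b * d ν (Fup c' μ ν)) := fun ν => by
        simp only [C', map_neg, map_sum, map_smul]
        simp_rw [hdLeib ν]
      simp_rw [this, Finset.sum_neg_distrib, sumComm3 (fun b c' => ((f a b c' : ℝ) : ℂ))
        (fun b c' ν => d ν (u b) * Fup c' μ ν + u b * d ν (Fup c' μ ν)), smul_neg]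
      rw [← pullSmul (fun b c' => ((f a b c' : ℝ) : ℂ)) Complex.I
        (fun b c' => ∑ ν, (d ν (u b) * Fup c' μ ν + u b * d ν (Fup c' μ ν)))]
      simp [smul_neg, Finset.sum_neg_distrib]
    rw [hR]
    simp only [Cup, map_sum, map_smul]
    exact Finset.sum_congr rfl fun b _ => Finset.sum_congr rfl fun c' _ =>
      congrArg _ (core b c')
  · -- part 4
    intro a μ ν
    set S1 := ∑ b, ∑ c', ((f a b c' : ℝ) : ℂ) • (d μ (u b) * v c' ν) with hS1def
    set S2' := ∑ b, ∑ c', ((f a b c' : ℝ) : ℂ) • (d ν (u b) * v c' μ) with hS2def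
    set T1 := ∑ b, ∑ c', ((f a b c' : ℝ) : ℂ) • (u b * d μ (v c' ν)) with hT1def
    set T2 := ∑ b, ∑ c', ((f a b c' : ℝ) : ℂ) • (u b * d ν (v c' μ)) with hT2def
    have hL : dQ (Eup a μ ν) = (((minkEta μ : ℝ) : ℂ) * Complex.I) • S1
        + (((minkEta ν : ℝ) : ℂ) * Complex.I) •
          (∑ b, ∑ c', ((f a b c' : ℝ) : ℂ) • (v b μ * d ν (u c'))) := by
      simp only [Eup, map_sum, map_smul]
      have k : ∀ b c' : Fin r, dQ (v b μ * v c' ν)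
          = (((minkEta μ : ℝ) : ℂ) * Complex.I) • (d μ (u b) * v c' ν)
            + (((minkEta ν : ℝ) : ℂ) * Complex.I) • (v b μ * d ν (u c')) := fun b c' => by
        rw [hdQev _ (hv b μ), hdQv, hdQv, smul_smul, smul_smul, smul_mul_assoc,
          mul_smul_comm]
      simp_rw [k, smul_add, Finset.sum_add_distrib]
      rw [pullSmul _ _ (fun b c' => d μ (u b) * v c' ν),
        pullSmul _ _ (fun b c' => v b μ * d ν (u c')), hS1def]
    have hswap : (∑ b, ∑ c', ((f a b c' : ℝ) : ℂ) • (v b μ * d ν (u c'))) = -S2' := by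
      rw [sumSwap _ (fA a) (fun b c' => v b μ * d ν (u c')), hS2def]
      refine congrArg Neg.neg (Finset.sum_congr rfl fun b _ =>
        Finset.sum_congr rfl fun c' _ => ?_)
      rw [comm _ (hv c' μ) (d ν (u b))]
    have hBμ : d ν (Bup a μ) = -(S2' + T2) := by
      simp only [Bup, map_neg, map_sum, map_smul]
      simp_rw [hdLeib ν, smul_add, Finset.sum_add_distrib]
      rfl
    have hBν : d μ (Bup a ν) = -(S1 + T1) := by
      simp only [Bup, map_neg, map_sum, map_smul]
      simp_rw [hdLeib μ, smul_add, Finset.sum_add_distrib]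
      rfl
    have hC' : C' a μ ν = -(((minkEta μ : ℝ) : ℂ) • T1 - ((minkEta ν : ℝ) : ℂ) • T2) := by
      simp only [C', Fup]
      have k : ∀ b c' : Fin r, u b * (((minkEta μ : ℝ) : ℂ) • d μ (v c' ν)
            - ((minkEta ν : ℝ) : ℂ) • d ν (v c' μ))
          = ((minkEta μ : ℝ) : ℂ) • (u b * d μ (v c' ν))
            - ((minkEta ν : ℝ) : ℂ) • (u b * d ν (v c' μ)) := fun b c' => by
        rw [mul_sub, mul_smul_comm, mul_smul_comm]
      simp_rw [k, smul_sub, Finset.sum_sub_distrib]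
      rw [pullSmul _ _ (fun b c' => u b * d μ (v c' ν)),
        pullSmul _ _ (fun b c' => u b * d ν (v c' μ)), hT1def, hT2def]
    rw [hL, hswap, hBμ, hBν, hC']
    module
  · -- part 5 : dQ Bsc = 0
    intro a
    have key : ∀ b c : Fin r, dQ (u b * u c) = 0 := fun b c => by
      rw [hdQod _ (hu b), hdQu, hdQu]; simp
    simp [Bsc, map_smul, map_sum, key]
  · -- part 6 : dQ C' = 0
    intro a μ ν
    have key : ∀ b c : Fin r, dQ (u b * Fup c μ ν) = 0 := fun b c => by
      rw [hdQod _ (hu b), hdQu, dQF]; simp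
    simp [C', map_neg, map_sum, map_smul, key]
end

section
/- Let f_{abc} be totally antisymmetric satisfying Jacobi. Define E_b^{νμ} = f_{bde} v_d^ν v_e^μ and B_b^μ = −f_{bde} u_d v_e^μ. Then Q_a^{μν} := f_{abc}(E_b^{νμ} u_c + B_b^μ v_c^ν − B_b^ν v_c^μ) = 0 for all a, μ, ν. -/
open scoped BigOperators

/-- in a graded-commutative algebra with even central generators `v_d^μ` and
pairwise anticommuting odd generators `u_d`, for totally antisymmetric `f` satisfying the
Jacobi identity, with `E_b^{νμ} = f_{bde} v_d^ν v_e^μ` and `B_b^μ = −f_{bde} u_d v_e^μ`,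
the expression `Q_a^{μν} = f_{abc}(E_b^{νμ} u_c + B_b^μ v_c^ν − B_b^ν v_c^μ)` vanishes. -/
theorem Q_munu_vanishes
    {r : ℕ} {A : Type*} [Ring A] [Algebra ℝ A]
    (f : Fin r → Fin r → Fin r → ℝ)
    (hf1 : ∀ a b c, f a b c = - f b a c)
    (hf2 : ∀ a b c, f a b c = - f a c b)
    (hJacobi : ∀ a b c d,
      ∑ e, (f e a b * f e c d + f e b c * f e a d + f e c a * f e b d) = 0)
    (u : Fin r → A) (v : Fin r → Fin 4 → A)
    (hu : ∀ a b, u a * u b = -(u b * u a))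
    (hvcentral : ∀ a μ (x : A), Commute (v a μ) x) :
    ∀ (a : Fin r) (μ ν : Fin 4),
      ∑ b, ∑ c, f a b c •
        ((∑ d, ∑ e, f b d e • (v d ν * v e μ)) * u c +
          (- ∑ d, ∑ e, f b d e • (u d * v e μ)) * v c ν -
          (- ∑ d, ∑ e, f b d e • (u d * v e ν)) * v c μ) = 0 := by
  intro a μ ν
  -- scalar consequence of Jacobi + antisymmetry
  have key : ∀ c d e : Fin r,
      ∑ b, (f a b c * f b d e - f a b d * f b c e + f a b e * f b c d) = 0 := by
    intro c d e
    have h := hJacobi a c d e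
    have hterm : ∀ b, f a b c * f b d e - f a b d * f b c e + f a b e * f b c d
        = -(f b a c * f b d e + f b c d * f b a e + f b d a * f b c e) := by
      intro b
      rw [hf1 a b c, hf1 a b d, hf1 a b e, hf2 b a d]
      ring
    rw [Finset.sum_congr rfl fun b _ => hterm b, Finset.sum_neg_distrib, h, neg_zero]
  have comm3 : ∀ (x : A) (e : Fin r) (m : Fin 4) (c : Fin r) (n : Fin 4),
      x * v e m * v c n = v c n * v e m * x := by
    intro x e m c n
    rw [← (hvcentral e m x).eq, mul_assoc, ← (hvcentral c n x).eq, ← mul_assoc,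
      ← (hvcentral c n (v e m)).eq]
  have hsw : ∀ (c e : Fin r), v c μ * v e ν = v e ν * v c μ :=
    fun c e => (hvcentral c μ (v e ν)).eq
  -- per-(b,c) expansion into quadruple sums of normalized monomials
  have step1 : ∀ b c : Fin r,
      f a b c • ((∑ d, ∑ e, f b d e • (v d ν * v e μ)) * u c +
        (- ∑ d, ∑ e, f b d e • (u d * v e μ)) * v c ν -
        (- ∑ d, ∑ e, f b d e • (u d * v e ν)) * v c μ)
      = ∑ d, ∑ e, ((f a b c * f b d e) • (v d ν * v e μ * u c)
          - (f a b c * f b d e) • (v c ν * v e μ * u d)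
          + (f a b c * f b d e) • (v e ν * v c μ * u d)) := by
    intro b c
    simp only [neg_mul, Finset.sum_mul, smul_mul_assoc, comm3, hsw, sub_neg_eq_add,
      smul_add, smul_neg, smul_sub, Finset.smul_sum, smul_smul, Finset.sum_neg_distrib,
      Finset.sum_add_distrib, Finset.sum_sub_distrib, sub_eq_add_neg, neg_neg]
  rw [Finset.sum_congr rfl fun b _ => Finset.sum_congr rfl fun c _ => step1 b c]
  simp only [Finset.sum_add_distrib, Finset.sum_sub_distrib]
  -- reindex the second quadruple sum (swap c and d)
  have hA2 : (∑ b, ∑ c, ∑ d, ∑ e : Fin r, (f a b c * f b d e) • (v c ν * v e μ * u d))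
      = ∑ b, ∑ c, ∑ d, ∑ e : Fin r, (f a b d * f b c e) • (v d ν * v e μ * u c) :=
    Finset.sum_congr rfl fun b _ => Finset.sum_comm
  -- reindex the third quadruple sum (cycle c → e → d → c)
  have hA3 : (∑ b, ∑ c, ∑ d, ∑ e : Fin r, (f a b c * f b d e) • (v e ν * v c μ * u d))
      = ∑ b, ∑ c, ∑ d, ∑ e : Fin r, (f a b e * f b c d) • (v d ν * v e μ * u c) := by
    refine Finset.sum_congr rfl fun b _ => ?_
    rw [Finset.sum_comm]
    exact Finset.sum_congr rfl fun d _ => Finset.sum_comm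
  rw [hA2, hA3]
  simp only [← Finset.sum_sub_distrib, ← Finset.sum_add_distrib, ← sub_smul, ← add_smul]
  rw [Finset.sum_comm]
  refine Finset.sum_eq_zero fun c _ => ?_
  rw [Finset.sum_comm]
  refine Finset.sum_eq_zero fun d _ => ?_
  rw [Finset.sum_comm]
  refine Finset.sum_eq_zero fun e _ => ?_
  rw [← Finset.sum_smul, key c d e, zero_smul]
end

section
/- Let f_{abc} be totally antisymmetric satisfying Jacobi. Define C_b^{μν} = −f_{bde} u_d F_e^{μν}, C_b^μ = f_{bde}(v_d^ν F_{eν}{}^μ − u_d ∂^μ ũ_e), B_b = (1/2) f_{bde} u_d u_e, B_{bν} = −f_{bde} u_d v_{eν}, and F_c^{μν} = ∂^μ v_c^ν − ∂^ν v_c^μ. Then P_a^μ := f_{abc}(C_b^{μν} v_{cν} − C_b^μ u_c + B_b ∂^μ ũ_c − B_{bν} F_c^{μν}) = 0 for all a and μ. -/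
open scoped BigOperators

set_option linter.unusedSectionVars false
set_option maxHeartbeats 1000000

section YMAux

variable {r : ℕ} {A : Type*} [Ring A] [Algebra ℝ A]
noncomputable def ymF (dv : Fin r → Fin 4 → Fin 4 → A) (c : Fin r) (ρ σ : Fin 4) : A :=
  minkEta ρ • dv c ρ σ - minkEta σ • dv c σ ρ
noncomputable def ymG (u : Fin r → A) (v : Fin r → Fin 4 → A)
    (dv : Fin r → Fin 4 → Fin 4 → A) (μ : Fin 4) (x y z : Fin r) : A :=
  ∑ ν, minkEta ν • (u x * ymF dv y μ ν * v z ν)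
noncomputable def ymK (u : Fin r → A) (du : Fin r → Fin 4 → A) (μ : Fin 4) (x y z : Fin r) : A :=
  minkEta μ • (u x * u y * du z μ)
lemma sum2_smul_mul (g : Fin r → Fin r → ℝ) (x : Fin r → Fin r → A) (y : A) :
    (∑ d, ∑ e, g d e • x d e) * y = ∑ d, ∑ e, g d e • (x d e * y) := by
  rw [Finset.sum_mul]
  exact Finset.sum_congr rfl fun d _ => by
    rw [Finset.sum_mul]
    exact Finset.sum_congr rfl fun e _ => smul_mul_assoc _ _ _
lemma smul_sum2 (t : ℝ) (g : Fin r → Fin r → ℝ) (x : Fin r → Fin r → A) :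
    t • (∑ d, ∑ e, g d e • x d e) = ∑ d, ∑ e, g d e • (t • x d e) := by
  rw [Finset.smul_sum]
  exact Finset.sum_congr rfl fun d _ => by
    rw [Finset.smul_sum]
    exact Finset.sum_congr rfl fun e _ => smul_comm t (g d e) (x d e)
lemma neg_sum2 (x : Fin r → Fin r → A) : -(∑ d, ∑ e, x d e) = ∑ d, ∑ e, -(x d e) := by
  simp
lemma sum_rot (x : Fin 4 → Fin r → Fin r → A) :
    ∑ ν, ∑ d, ∑ e, x ν d e = ∑ d, ∑ e, ∑ ν, x ν d e := by
  rw [Finset.sum_comm]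
  exact Finset.sum_congr rfl fun d _ => Finset.sum_comm
lemma ymF_swap (dv : Fin r → Fin 4 → Fin 4 → A) (c : Fin r) (ρ σ : Fin 4) :
    ymF dv c ρ σ = -(ymF dv c σ ρ) := by
  unfold ymF; rw [neg_sub]
lemma ymF_commute (dv : Fin r → Fin 4 → Fin 4 → A)
    (hdvcentral : ∀ a μ ν (x : A), Commute (dv a μ ν) x)
    (c : Fin r) (ρ σ : Fin 4) (x : A) : Commute (ymF dv c ρ σ) x :=
  ((hdvcentral c ρ σ x).smul_left _).sub_left ((hdvcentral c σ ρ x).smul_left _)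

variable (f : Fin r → Fin r → Fin r → ℝ) (u : Fin r → A) (du : Fin r → Fin 4 → A)
    (v : Fin r → Fin 4 → A) (dv : Fin r → Fin 4 → Fin 4 → A) (μ : Fin 4)

lemma ymE1 (b c : Fin r) :
    ∑ ν, minkEta ν • ((- ∑ d, ∑ e, f b d e • (u d * ymF dv e μ ν)) * v c ν)
      = ∑ d, ∑ e, f b d e • -(ymG u v dv μ d e c) := by
  have h1 : ∀ ν : Fin 4,
      minkEta ν • ((- ∑ d, ∑ e, f b d e • (u d * ymF dv e μ ν)) * v c ν)
        = ∑ d, ∑ e, f b d e • -(minkEta ν • (u d * ymF dv e μ ν * v c ν)) := by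
    intro ν
    rw [neg_mul, smul_neg, sum2_smul_mul, smul_sum2, neg_sum2]
    exact Finset.sum_congr rfl fun d _ => Finset.sum_congr rfl fun e _ => (smul_neg _ _).symm
  rw [Finset.sum_congr rfl fun ν _ => h1 ν, sum_rot]
  refine Finset.sum_congr rfl fun d _ => Finset.sum_congr rfl fun e _ => ?_
  rw [← Finset.smul_sum, ymG, ← Finset.sum_neg_distrib]

lemma ymE2 (hu : ∀ a b, u a * u b = -(u b * u a))
    (hudu : ∀ a b μ, u a * du b μ = -(du b μ * u a))
    (hvcentral : ∀ a μ (x : A), Commute (v a μ) x)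
    (hdvcentral : ∀ a μ ν (x : A), Commute (dv a μ ν) x)
    (b c : Fin r) :
    (∑ d, ∑ e, f b d e •
        ((∑ ν, minkEta ν • (v d ν * ymF dv e ν μ)) - minkEta μ • (u d * du e μ))) * u c
      = ∑ d, ∑ e, f b d e • (-(ymG u v dv μ c e d) + ymK u du μ d c e) := by
  rw [sum2_smul_mul]
  refine Finset.sum_congr rfl fun d _ => Finset.sum_congr rfl fun e _ => ?_
  congr 1
  rw [sub_mul, Finset.sum_mul, smul_mul_assoc]
  have hm1 : ∀ ν : Fin 4, minkEta ν • (v d ν * ymF dv e ν μ) * u c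
      = -(minkEta ν • (u c * ymF dv e μ ν * v d ν)) := by
    intro ν
    rw [smul_mul_assoc, ← smul_neg]
    congr 1
    rw [ymF_swap dv e ν μ, mul_neg, neg_mul, mul_assoc, (hvcentral d ν _).eq,
      ← (ymF_commute dv hdvcentral e μ ν (u c)).eq]
  rw [Finset.sum_congr rfl fun ν _ => hm1 ν, Finset.sum_neg_distrib]
  have hm2 : u d * du e μ * u c = -(u d * u c * du e μ) := by
    have : du e μ * u c = -(u c * du e μ) := by
      rw [hudu c e μ, neg_neg]
    rw [mul_assoc, this, mul_neg, mul_assoc]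
  rw [hm2, smul_neg, sub_neg_eq_add, ymG, ymK]

lemma ymE3 (b c : Fin r) :
    minkEta μ • (((1 / 2 : ℝ) • ∑ d, ∑ e, f b d e • (u d * u e)) * du c μ)
      = ∑ d, ∑ e, f b d e • ((1 / 2 : ℝ) • ymK u du μ d e c) := by
  rw [smul_mul_assoc, smul_comm (minkEta μ) ((1/2 : ℝ)), sum2_smul_mul, smul_sum2, smul_sum2]
  refine Finset.sum_congr rfl fun d _ => Finset.sum_congr rfl fun e _ => rfl

lemma ymE4 (hvcentral : ∀ a μ (x : A), Commute (v a μ) x) (b c : Fin r) :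
    ∑ ν, (- ∑ d, ∑ e, f b d e • (minkEta ν • (u d * v e ν))) * ymF dv c μ ν
      = ∑ d, ∑ e, f b d e • -(ymG u v dv μ d c e) := by
  have h1 : ∀ ν : Fin 4,
      (- ∑ d, ∑ e, f b d e • (minkEta ν • (u d * v e ν))) * ymF dv c μ ν
        = ∑ d, ∑ e, f b d e • -(minkEta ν • (u d * ymF dv c μ ν * v e ν)) := by
    intro ν
    rw [neg_mul, sum2_smul_mul, neg_sum2]
    refine Finset.sum_congr rfl fun d _ => Finset.sum_congr rfl fun e _ => ?_
    rw [← smul_neg]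
    congr 1
    rw [smul_mul_assoc, ← smul_neg]
    congr 1
    rw [mul_assoc, (hvcentral e ν _).eq, mul_assoc]
    exact smul_neg _ _
  rw [Finset.sum_congr rfl fun ν _ => h1 ν, sum_rot]
  refine Finset.sum_congr rfl fun d _ => Finset.sum_congr rfl fun e _ => ?_
  rw [← Finset.smul_sum, ymG, ← Finset.sum_neg_distrib]

variable {r : ℕ} {A : Type*} [Ring A] [Algebra ℝ A]

lemma sum_rot3 (F : Fin r → Fin r → Fin r → A) :
    ∑ c, ∑ d, ∑ e, F c d e = ∑ d, ∑ e, ∑ c, F c d e := by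
  rw [Finset.sum_comm]
  exact Finset.sum_congr rfl fun _ _ => Finset.sum_comm

lemma sum4_rot (F : Fin r → Fin r → Fin r → Fin r → A) :
    ∑ b, ∑ x, ∑ y, ∑ z, F b x y z = ∑ x, ∑ y, ∑ z, ∑ b, F b x y z := by
  rw [Finset.sum_comm]
  refine Finset.sum_congr rfl fun x _ => ?_
  rw [Finset.sum_comm]
  exact Finset.sum_congr rfl fun y _ => Finset.sum_comm

lemma jacA (f : Fin r → Fin r → Fin r → ℝ)
    (hf1 : ∀ a b c, f a b c = - f b a c) (hf2 : ∀ a b c, f a b c = - f a c b)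
    (hJacobi : ∀ a b c d,
      ∑ e, (f e a b * f e c d + f e b c * f e a d + f e c a * f e b d) = 0)
    (a x y z : Fin r) :
    ∑ b, (-(f a b z * f b x y) + f a b x * f b z y + f a b y * f b x z) = 0 := by
  have h := hJacobi x y z a
  calc ∑ b, (-(f a b z * f b x y) + f a b x * f b z y + f a b y * f b x z)
      = ∑ b, -((f b x y * f b z a + f b y z * f b x a + f b z x * f b y a)) := by
        refine Finset.sum_congr rfl fun b _ => ?_
        have e1 : f a b z = f b z a := by rw [hf1 a b z, hf2 b a z]; ring
        have e2 : f a b x = f b x a := by rw [hf1 a b x, hf2 b a x]; ring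
        have e3 : f a b y = f b y a := by rw [hf1 a b y, hf2 b a y]; ring
        rw [e1, e2, e3, hf2 b z y, hf2 b x z]; ring
    _ = -∑ b, (f b x y * f b z a + f b y z * f b x a + f b z x * f b y a) :=
        Finset.sum_neg_distrib _
    _ = 0 := by rw [h, neg_zero]

lemma jacB (f : Fin r → Fin r → Fin r → ℝ)
    (hf1 : ∀ a b c, f a b c = - f b a c) (hf2 : ∀ a b c, f a b c = - f a c b)
    (hJacobi : ∀ a b c d,
      ∑ e, (f e a b * f e c d + f e b c * f e a d + f e c a * f e b d) = 0)
    (a x y z : Fin r) :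
    ∑ b, ((-(f a b y * f b x z) + f a b z * f b x y * (1 / 2 : ℝ)) -
          (-(f a b x * f b y z) + f a b z * f b y x * (1 / 2 : ℝ))) = 0 := by
  have h := hJacobi x y z a
  calc ∑ b, ((-(f a b y * f b x z) + f a b z * f b x y * (1 / 2 : ℝ)) -
          (-(f a b x * f b y z) + f a b z * f b y x * (1 / 2 : ℝ)))
      = ∑ b, (f b x y * f b z a + f b y z * f b x a + f b z x * f b y a) := by
        refine Finset.sum_congr rfl fun b _ => ?_
        have e1 : f a b z = f b z a := by rw [hf1 a b z, hf2 b a z]; ring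
        have e2 : f a b x = f b x a := by rw [hf1 a b x, hf2 b a x]; ring
        have e3 : f a b y = f b y a := by rw [hf1 a b y, hf2 b a y]; ring
        rw [e1, e2, e3, hf2 b y x, hf2 b x z]; ring
    _ = 0 := h

lemma ymCore (f : Fin r → Fin r → Fin r → ℝ)
    (hf1 : ∀ a b c, f a b c = - f b a c) (hf2 : ∀ a b c, f a b c = - f a c b)
    (hJacobi : ∀ a b c d,
      ∑ e, (f e a b * f e c d + f e b c * f e a d + f e c a * f e b d) = 0)
    (a : Fin r) (G K : Fin r → Fin r → Fin r → A)
    (hK : ∀ x y z, K y x z = -(K x y z)) :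
    ∑ b, ∑ c, ∑ d, ∑ e, (f a b c * f b d e) •
      (-(G d e c) - (-(G c e d) + K d c e) + (1 / 2 : ℝ) • K d e c - -(G d c e)) = 0 := by
  have hsplit : ∀ (s : ℝ) (g1 g2 g3 k1 k2 : A),
      s • (-g1 - (-g2 + k1) + (1/2:ℝ) • k2 - -g3)
        = ((-(s • g1) + s • g2) + s • g3) + (-(s • k1) + (s * (1/2:ℝ)) • k2) := by
    intros; module
  have hsplitall :
      (∑ b, ∑ c, ∑ d, ∑ e, (f a b c * f b d e) •
        (-(G d e c) - (-(G c e d) + K d c e) + (1 / 2 : ℝ) • K d e c - -(G d c e)))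
      = ((((∑ b, ∑ c, ∑ d, ∑ e, -((f a b c * f b d e) • G d e c)) +
           (∑ b, ∑ c, ∑ d, ∑ e, (f a b c * f b d e) • G c e d)) +
           (∑ b, ∑ c, ∑ d, ∑ e, (f a b c * f b d e) • G d c e)) +
          ((∑ b, ∑ c, ∑ d, ∑ e, -((f a b c * f b d e) • K d c e)) +
           (∑ b, ∑ c, ∑ d, ∑ e, ((f a b c * f b d e) * (1/2:ℝ)) • K d e c))) := by
    simp only [hsplit, Finset.sum_add_distrib]
  rw [hsplitall]
  have hA : (((∑ b, ∑ c, ∑ d, ∑ e, -((f a b c * f b d e) • G d e c)) +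
           (∑ b, ∑ c, ∑ d, ∑ e, (f a b c * f b d e) • G c e d)) +
           (∑ b, ∑ c, ∑ d, ∑ e, (f a b c * f b d e) • G d c e)) = 0 := by
    have e1 : ∀ b : Fin r, (∑ c, ∑ d, ∑ e, -((f a b c * f b d e) • G d e c))
        = ∑ x, ∑ y, ∑ z, -((f a b z * f b x y) • G x y z) := fun b =>
      sum_rot3 (fun c d e => -((f a b c * f b d e) • G d e c))
    have e2 : ∀ b : Fin r, (∑ c, ∑ d, ∑ e, (f a b c * f b d e) • G c e d)
        = ∑ x, ∑ y, ∑ z, (f a b x * f b z y) • G x y z := fun b =>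
      Finset.sum_congr rfl fun c _ => Finset.sum_comm
    have e3 : ∀ b : Fin r, (∑ c, ∑ d, ∑ e, (f a b c * f b d e) • G d c e)
        = ∑ x, ∑ y, ∑ z, (f a b y * f b x z) • G x y z := fun b =>
      Finset.sum_comm
    calc (((∑ b, ∑ c, ∑ d, ∑ e, -((f a b c * f b d e) • G d e c)) +
           (∑ b, ∑ c, ∑ d, ∑ e, (f a b c * f b d e) • G c e d)) +
           (∑ b, ∑ c, ∑ d, ∑ e, (f a b c * f b d e) • G d c e))
        = ∑ b, ∑ x, ∑ y, ∑ z,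
            ((-((f a b z * f b x y) • G x y z) + (f a b x * f b z y) • G x y z) +
              (f a b y * f b x z) • G x y z) := by
          simp only [e1, e2, e3, ← Finset.sum_add_distrib]
      _ = ∑ x, ∑ y, ∑ z, ∑ b,
            ((-((f a b z * f b x y) • G x y z) + (f a b x * f b z y) • G x y z) +
              (f a b y * f b x z) • G x y z) := sum4_rot _
      _ = 0 := by
          refine Finset.sum_eq_zero fun x _ => Finset.sum_eq_zero fun y _ =>
            Finset.sum_eq_zero fun z _ => ?_
          have hj := jacA f hf1 hf2 hJacobi a x y z
          calc ∑ b, ((-((f a b z * f b x y) • G x y z) + (f a b x * f b z y) • G x y z) +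
              (f a b y * f b x z) • G x y z)
              = ∑ b, (-(f a b z * f b x y) + f a b x * f b z y + f a b y * f b x z) • G x y z := by
                refine Finset.sum_congr rfl fun b _ => ?_
                rw [add_smul, add_smul, neg_smul]
            _ = (∑ b, (-(f a b z * f b x y) + f a b x * f b z y + f a b y * f b x z)) • G x y z :=
                (Finset.sum_smul).symm
            _ = 0 := by rw [hj, zero_smul]
  have hB : ((∑ b, ∑ c, ∑ d, ∑ e, -((f a b c * f b d e) • K d c e)) +
           (∑ b, ∑ c, ∑ d, ∑ e, ((f a b c * f b d e) * (1/2:ℝ)) • K d e c)) = 0 := by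
    have e4 : ∀ b : Fin r, (∑ c, ∑ d, ∑ e, -((f a b c * f b d e) • K d c e))
        = ∑ x, ∑ y, ∑ z, -((f a b y * f b x z) • K x y z) := fun b =>
      Finset.sum_comm
    have e5 : ∀ b : Fin r, (∑ c, ∑ d, ∑ e, ((f a b c * f b d e) * (1/2:ℝ)) • K d e c)
        = ∑ x, ∑ y, ∑ z, ((f a b z * f b x y) * (1/2:ℝ)) • K x y z := fun b =>
      sum_rot3 (fun c d e => ((f a b c * f b d e) * (1/2:ℝ)) • K d e c)
    have hcomb : ((∑ b, ∑ c, ∑ d, ∑ e, -((f a b c * f b d e) • K d c e)) +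
           (∑ b, ∑ c, ∑ d, ∑ e, ((f a b c * f b d e) * (1/2:ℝ)) • K d e c))
        = ∑ x, ∑ y, ∑ z,
            (∑ b, (-(f a b y * f b x z) + f a b z * f b x y * (1/2:ℝ))) • K x y z := by
      calc ((∑ b, ∑ c, ∑ d, ∑ e, -((f a b c * f b d e) • K d c e)) +
           (∑ b, ∑ c, ∑ d, ∑ e, ((f a b c * f b d e) * (1/2:ℝ)) • K d e c))
          = ∑ b, ∑ x, ∑ y, ∑ z,
              (-((f a b y * f b x z) • K x y z) + ((f a b z * f b x y) * (1/2:ℝ)) • K x y z) := by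
            simp only [e4, e5, ← Finset.sum_add_distrib]
        _ = ∑ x, ∑ y, ∑ z, ∑ b,
              (-((f a b y * f b x z) • K x y z) + ((f a b z * f b x y) * (1/2:ℝ)) • K x y z) :=
            sum4_rot _
        _ = ∑ x, ∑ y, ∑ z,
              (∑ b, (-(f a b y * f b x z) + f a b z * f b x y * (1/2:ℝ))) • K x y z := by
            refine Finset.sum_congr rfl fun x _ => Finset.sum_congr rfl fun y _ =>
              Finset.sum_congr rfl fun z _ => ?_
            rw [Finset.sum_smul]
            refine Finset.sum_congr rfl fun b _ => ?_
            rw [add_smul, neg_smul]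
    rw [hcomb]
    set cB : Fin r → Fin r → Fin r → ℝ := fun x y z =>
      ∑ b, (-(f a b y * f b x z) + f a b z * f b x y * (1/2:ℝ)) with hcB
    have hswap : (∑ x, ∑ y, ∑ z, cB x y z • K x y z)
        = -(∑ x, ∑ y, ∑ z, cB y x z • K x y z) := by
      calc (∑ x, ∑ y, ∑ z, cB x y z • K x y z)
          = ∑ x, ∑ y, ∑ z, cB y x z • K y x z := Finset.sum_comm
        _ = ∑ x, ∑ y, ∑ z, -(cB y x z • K x y z) := by
            refine Finset.sum_congr rfl fun x _ => Finset.sum_congr rfl fun y _ =>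
              Finset.sum_congr rfl fun z _ => ?_
            rw [hK x y z, smul_neg]
        _ = -(∑ x, ∑ y, ∑ z, cB y x z • K x y z) := by
            simp only [Finset.sum_neg_distrib]
    have hdiff : (∑ x, ∑ y, ∑ z, cB x y z • K x y z)
        - (∑ x, ∑ y, ∑ z, cB y x z • K x y z) = 0 := by
      simp only [← Finset.sum_sub_distrib]
      refine Finset.sum_eq_zero fun x _ => Finset.sum_eq_zero fun y _ =>
        Finset.sum_eq_zero fun z _ => ?_
      rw [← sub_smul]
      have : cB x y z - cB y x z = 0 := by
        rw [hcB]
        simp only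
        rw [← Finset.sum_sub_distrib]
        exact jacB f hf1 hf2 hJacobi a x y z
      rw [this, zero_smul]
    set S := ∑ x, ∑ y, ∑ z, cB x y z • K x y z with hS
    set T := ∑ x, ∑ y, ∑ z, cB y x z • K x y z with hT
    have h2 : (2:ℝ) • S = 0 := by
      have : S + S = (S - T) + (S + T) := by abel
      rw [two_smul, this, hdiff]
      rw [hswap]
      abel
    calc S = (1/2:ℝ) • ((2:ℝ) • S) := by rw [smul_smul]; norm_num
      _ = 0 := by rw [h2, smul_zero]
  rw [hA, hB, add_zero]

variable (f : Fin r → Fin r → Fin r → ℝ) (u : Fin r → A) (du : Fin r → Fin 4 → A)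
    (v : Fin r → Fin 4 → A) (dv : Fin r → Fin 4 → Fin 4 → A) (μ : Fin 4)

lemma ymL (hu : ∀ a b, u a * u b = -(u b * u a))
    (hudu : ∀ a b μ, u a * du b μ = -(du b μ * u a))
    (hvcentral : ∀ a μ (x : A), Commute (v a μ) x)
    (hdvcentral : ∀ a μ ν (x : A), Commute (dv a μ ν) x)
    (b c : Fin r) :
    (∑ ν, minkEta ν • ((- ∑ d, ∑ e, f b d e • (u d * ymF dv e μ ν)) * v c ν)) -
      (∑ d, ∑ e, f b d e •
        ((∑ ν, minkEta ν • (v d ν * ymF dv e ν μ)) - minkEta μ • (u d * du e μ))) * u c +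
      minkEta μ • (((1 / 2 : ℝ) • ∑ d, ∑ e, f b d e • (u d * u e)) * du c μ) -
      ∑ ν, (- ∑ d, ∑ e, f b d e • (minkEta ν • (u d * v e ν))) * ymF dv c μ ν
    = ∑ d, ∑ e, f b d e •
        (-(ymG u v dv μ d e c) - (-(ymG u v dv μ c e d) + ymK u du μ d c e)
          + (1 / 2 : ℝ) • ymK u du μ d e c - -(ymG u v dv μ d c e)) := by
  rw [ymE1 f u v dv μ b c, ymE2 f u du v dv μ hu hudu hvcentral hdvcentral b c,
    ymE3 f u du μ b c, ymE4 f u v dv μ hvcentral b c]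
  simp only [← Finset.sum_sub_distrib, ← Finset.sum_add_distrib]
  refine Finset.sum_congr rfl fun d _ => Finset.sum_congr rfl fun e _ => ?_
  module

lemma ymMain
    (hf1 : ∀ a b c, f a b c = - f b a c) (hf2 : ∀ a b c, f a b c = - f a c b)
    (hJacobi : ∀ a b c d,
      ∑ e, (f e a b * f e c d + f e b c * f e a d + f e c a * f e b d) = 0)
    (hu : ∀ a b, u a * u b = -(u b * u a))
    (hudu : ∀ a b μ, u a * du b μ = -(du b μ * u a))
    (hvcentral : ∀ a μ (x : A), Commute (v a μ) x)
    (hdvcentral : ∀ a μ ν (x : A), Commute (dv a μ ν) x)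
    (a : Fin r) :
    ∑ b, ∑ c, f a b c •
      ((∑ ν, minkEta ν • ((- ∑ d, ∑ e, f b d e • (u d * ymF dv e μ ν)) * v c ν)) -
        (∑ d, ∑ e, f b d e •
          ((∑ ν, minkEta ν • (v d ν * ymF dv e ν μ)) - minkEta μ • (u d * du e μ))) * u c +
        minkEta μ • (((1 / 2 : ℝ) • ∑ d, ∑ e, f b d e • (u d * u e)) * du c μ) -
        ∑ ν, (- ∑ d, ∑ e, f b d e • (minkEta ν • (u d * v e ν))) * ymF dv c μ ν) = 0 := by
  have hKswap : ∀ x y z, ymK u du μ y x z = -(ymK u du μ x y z) := by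
    intro x y z
    unfold ymK
    rw [hu y x, neg_mul, smul_neg]
  calc ∑ b, ∑ c, f a b c •
      ((∑ ν, minkEta ν • ((- ∑ d, ∑ e, f b d e • (u d * ymF dv e μ ν)) * v c ν)) -
        (∑ d, ∑ e, f b d e •
          ((∑ ν, minkEta ν • (v d ν * ymF dv e ν μ)) - minkEta μ • (u d * du e μ))) * u c +
        minkEta μ • (((1 / 2 : ℝ) • ∑ d, ∑ e, f b d e • (u d * u e)) * du c μ) -
        ∑ ν, (- ∑ d, ∑ e, f b d e • (minkEta ν • (u d * v e ν))) * ymF dv c μ ν)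
      = ∑ b, ∑ c, ∑ d, ∑ e, (f a b c * f b d e) •
          (-(ymG u v dv μ d e c) - (-(ymG u v dv μ c e d) + ymK u du μ d c e)
            + (1 / 2 : ℝ) • ymK u du μ d e c - -(ymG u v dv μ d c e)) := by
        refine Finset.sum_congr rfl fun b _ => Finset.sum_congr rfl fun c _ => ?_
        rw [ymL f u du v dv μ hu hudu hvcentral hdvcentral b c, smul_sum2]
        refine Finset.sum_congr rfl fun d _ => Finset.sum_congr rfl fun e _ => ?_
        rw [smul_smul, mul_comm (f b d e) (f a b c)]
    _ = 0 := ymCore f hf1 hf2 hJacobi a (ymG u v dv μ) (ymK u du μ) hKswap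

end YMAux

/-- in the graded jet algebra of pure Yang-Mills (even central generators
`v_a^μ`, `∂_μ v_a^ν`; odd anticommuting generators `u_a`, `∂_μ ũ_a`), for totally
antisymmetric `f` satisfying the Jacobi identity, with
`C_b^{μν} = −f_{bde} u_d F_e^{μν}`, `C_b^μ = f_{bde}(v_d^ν F_{eν}{}^μ − u_d ∂^μ ũ_e)`,
`B_b = (1/2) f_{bde} u_d u_e`, `B_{bν} = −f_{bde} u_d v_{eν}`,
`F_c^{μν} = ∂^μ v_c^ν − ∂^ν v_c^μ`, the quantity
`P_a^μ = f_{abc}(C_b^{μν} v_{cν} − C_b^μ u_c + B_b ∂^μ ũ_c − B_{bν} F_c^{μν})`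
vanishes for all `a` and `μ`.  Here `dv a μ ν` stands for `∂_μ v_a^ν`, `du a μ` for
`∂_μ ũ_a`. -/
theorem P_mu_vanishes
    {r : ℕ} {A : Type*} [Ring A] [Algebra ℝ A]
    (f : Fin r → Fin r → Fin r → ℝ)
    (hf1 : ∀ a b c, f a b c = - f b a c)
    (hf2 : ∀ a b c, f a b c = - f a c b)
    (hJacobi : ∀ a b c d,
      ∑ e, (f e a b * f e c d + f e b c * f e a d + f e c a * f e b d) = 0)
    (u : Fin r → A) (du : Fin r → Fin 4 → A)
    (v : Fin r → Fin 4 → A) (dv : Fin r → Fin 4 → Fin 4 → A)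
    (hu : ∀ a b, u a * u b = -(u b * u a))
    (hudu : ∀ a b μ, u a * du b μ = -(du b μ * u a))
    (hdudu : ∀ a b μ ν, du a μ * du b ν = -(du b ν * du a μ))
    (hvcentral : ∀ a μ (x : A), Commute (v a μ) x)
    (hdvcentral : ∀ a μ ν (x : A), Commute (dv a μ ν) x) :
    ∀ (a : Fin r) (μ : Fin 4),
      (let Fup : Fin r → Fin 4 → Fin 4 → A := fun c ρ σ =>
         minkEta ρ • dv c ρ σ - minkEta σ • dv c σ ρ
       let Cmunu : Fin r → Fin 4 → Fin 4 → A := fun b ρ σ =>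
         - ∑ d, ∑ e, f b d e • (u d * Fup e ρ σ)
       let Cup : Fin r → Fin 4 → A := fun b ρ =>
         ∑ d, ∑ e, f b d e •
           ((∑ ν, minkEta ν • (v d ν * Fup e ν ρ)) - minkEta ρ • (u d * du e ρ))
       let Bsc : Fin r → A := fun b =>
         (1 / 2 : ℝ) • ∑ d, ∑ e, f b d e • (u d * u e)
       let Blow : Fin r → Fin 4 → A := fun b ν =>
         - ∑ d, ∑ e, f b d e • (minkEta ν • (u d * v e ν))
       ∑ b, ∑ c, f a b c •
         ((∑ ν, minkEta ν • (Cmunu b μ ν * v c ν)) -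
           Cup b μ * u c +
           minkEta μ • (Bsc b * du c μ) -
           ∑ ν, Blow b ν * Fup c μ ν)) = 0 := by
  intro a μ
  exact ymMain f u du v dv μ hf1 hf2 hJacobi hu hudu hvcentral hdvcentral a
end

section
/- Let f_{abc} be totally antisymmetric satisfying Jacobi. With B_a^μ = −f_{abc} u_b v_c^μ, B_a = (1/2) f_{abc} u_b u_c, and E_a^{ρμ} = f_{abc} v_b^ρ v_c^μ, the combination F^μ := f_{a₁a₂a₃}[(−v_{a₁}^μ B_{a₂}^ρ + v_{a₁}^ρ B_{a₂}^μ) B_{a₃ρ} + v_{a₁ρ} E_{a₂}^{ρμ} B_{a₃}] vanishes. -/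
open scoped BigOperators

set_option maxHeartbeats 1000000

namespace F11aux

set_option linter.unusedSectionVars false

variable {r : ℕ} {A : Type*} [Ring A] [Algebra ℝ A]

noncomputable def W (v : Fin r → Fin 4 → A) (μ : Fin 4) (x y z : Fin r) : A :=
  ∑ ρ, minkEta ρ • (v x μ * (v y ρ * v z ρ))

noncomputable def Mn (u : Fin r → A) (v : Fin r → Fin 4 → A) (μ : Fin 4)
    (p q x y z : Fin r) : A := u p * u q * W v μ x y z

lemma central_left (v : Fin r → Fin 4 → A)
    (hv : ∀ a μ (x : A), Commute (v a μ) x) (a : Fin r) (ν : Fin 4) (x y : A) :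
    x * (v a ν * y) = v a ν * (x * y) := by
  rw [← mul_assoc, ← (hv a ν x).eq, mul_assoc]

lemma mono1 (u : Fin r → A) (v : Fin r → Fin 4 → A)
    (hv : ∀ a μ (x : A), Commute (v a μ) x) (a1 b b' c c' : Fin r) (μ ρ : Fin 4) :
    (v a1 μ * (u b * v c ρ)) * (u b' * v c' ρ)
      = u b * u b' * (v a1 μ * (v c ρ * v c' ρ)) := by
  rw [mul_assoc, Commute.mul_mul_mul_comm (hv c ρ (u b')), ← central_left v hv]

lemma mono2 (u : Fin r → A) (v : Fin r → Fin 4 → A)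
    (hv : ∀ a μ (x : A), Commute (v a μ) x) (a1 b b' c c' : Fin r) (μ ρ : Fin 4) :
    (v a1 ρ * (u b * v c μ)) * (u b' * v c' ρ)
      = u b * u b' * (v c μ * (v a1 ρ * v c' ρ)) := by
  rw [mul_assoc, Commute.mul_mul_mul_comm (hv c μ (u b')), ← central_left v hv,
    central_left v hv c μ (v a1 ρ)]

lemma mono3 (u : Fin r → A) (v : Fin r → Fin 4 → A)
    (hv : ∀ a μ (x : A), Commute (v a μ) x) (a1 b b' c c' : Fin r) (μ ρ : Fin 4) :
    (v a1 ρ * (v b ρ * v c μ)) * (u b' * u c')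
      = u b' * u c' * (v c μ * (v a1 ρ * v b ρ)) := by
  rw [((hv a1 ρ (u b' * u c')).mul_left ((hv b ρ (u b' * u c')).mul_left
      (hv c μ (u b' * u c')))).eq, (hv b ρ (v c μ)).eq, central_left v hv c μ (v a1 ρ)]

lemma perm5a {β γ M : Type*} [Fintype β] [Fintype γ] [AddCommMonoid M]
    (F : γ → β → β → β → β → M) :
    ∑ x : γ, ∑ a, ∑ b, ∑ c, ∑ d, F x a b c d
      = ∑ c, ∑ d, ∑ a, ∑ b, ∑ x, F x a b c d := by
  have h1 : (∑ x : γ, ∑ a, ∑ b, ∑ c, ∑ d, F x a b c d)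
      = ∑ t : γ × β × β × β × β, F t.1 t.2.1 t.2.2.1 t.2.2.2.1 t.2.2.2.2 := by
    simp only [Fintype.sum_prod_type]
  have h2 : (∑ c, ∑ d, ∑ a, ∑ b, ∑ x : γ, F x a b c d)
      = ∑ t : β × β × β × β × γ, F t.2.2.2.2 t.2.2.1 t.2.2.2.1 t.1 t.2.1 := by
    simp only [Fintype.sum_prod_type]
  rw [h1, h2]
  exact (Fintype.sum_bijective
    (fun t : β × β × β × β × γ =>
      ((t.2.2.2.2, t.2.2.1, t.2.2.2.1, t.1, t.2.1) : γ × β × β × β × β))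
    (Equiv.mk
      (fun t : β × β × β × β × γ =>
        ((t.2.2.2.2, t.2.2.1, t.2.2.2.1, t.1, t.2.1) : γ × β × β × β × β))
      (fun s => (s.2.2.2.1, s.2.2.2.2, s.2.1, s.2.2.1, s.1))
      (fun _ => rfl) (fun _ => rfl)).bijective
    _ _ (fun t => rfl)).symm

abbrev T7 (β : Type*) := β × β × β × β × β × β × β

lemma perm7a {β M : Type*} [Fintype β] [AddCommMonoid M]
    (F : β → β → β → β → β → β → β → M) :
    ∑ a1, ∑ a2, ∑ a3, ∑ b, ∑ c, ∑ b', ∑ c', F a1 a2 a3 b c b' c'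
      = ∑ b, ∑ b', ∑ a1, ∑ c, ∑ c', ∑ a2, ∑ a3, F a1 a2 a3 b c b' c' := by
  have h1 : (∑ a1, ∑ a2, ∑ a3, ∑ b, ∑ c, ∑ b', ∑ c', F a1 a2 a3 b c b' c')
      = ∑ t : T7 β, F t.1 t.2.1 t.2.2.1 t.2.2.2.1 t.2.2.2.2.1 t.2.2.2.2.2.1
          t.2.2.2.2.2.2 := by
    simp only [Fintype.sum_prod_type]
  have h2 : (∑ b, ∑ b', ∑ a1, ∑ c, ∑ c', ∑ a2, ∑ a3, F a1 a2 a3 b c b' c')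
      = ∑ s : T7 β, F s.2.2.1 s.2.2.2.2.2.1 s.2.2.2.2.2.2 s.1 s.2.2.2.1 s.2.1
          s.2.2.2.2.1 := by
    simp only [Fintype.sum_prod_type]
  rw [h1, h2]
  exact (Fintype.sum_bijective
    (fun s : T7 β => ((s.2.2.1, s.2.2.2.2.2.1, s.2.2.2.2.2.2, s.1, s.2.2.2.1, s.2.1,
      s.2.2.2.2.1) : T7 β))
    (Equiv.mk
      (fun s : T7 β => ((s.2.2.1, s.2.2.2.2.2.1, s.2.2.2.2.2.2, s.1, s.2.2.2.1, s.2.1,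
        s.2.2.2.2.1) : T7 β))
      (fun t => (t.2.2.2.1, t.2.2.2.2.2.1, t.1, t.2.2.2.2.1, t.2.2.2.2.2.2, t.2.1,
        t.2.2.1))
      (fun _ => rfl) (fun _ => rfl)).bijective
    _ _ (fun s => rfl)).symm

lemma perm7b {β M : Type*} [Fintype β] [AddCommMonoid M]
    (F : β → β → β → β → β → β → β → M) :
    ∑ a1, ∑ a2, ∑ a3, ∑ b, ∑ c, ∑ b', ∑ c', F a1 a2 a3 b c b' c'
      = ∑ b, ∑ b', ∑ c, ∑ a1, ∑ c', ∑ a2, ∑ a3, F a1 a2 a3 b c b' c' := by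
  have h1 : (∑ a1, ∑ a2, ∑ a3, ∑ b, ∑ c, ∑ b', ∑ c', F a1 a2 a3 b c b' c')
      = ∑ t : T7 β, F t.1 t.2.1 t.2.2.1 t.2.2.2.1 t.2.2.2.2.1 t.2.2.2.2.2.1
          t.2.2.2.2.2.2 := by
    simp only [Fintype.sum_prod_type]
  have h2 : (∑ b, ∑ b', ∑ c, ∑ a1, ∑ c', ∑ a2, ∑ a3, F a1 a2 a3 b c b' c')
      = ∑ s : T7 β, F s.2.2.2.1 s.2.2.2.2.2.1 s.2.2.2.2.2.2 s.1 s.2.2.1 s.2.1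
          s.2.2.2.2.1 := by
    simp only [Fintype.sum_prod_type]
  rw [h1, h2]
  exact (Fintype.sum_bijective
    (fun s : T7 β => ((s.2.2.2.1, s.2.2.2.2.2.1, s.2.2.2.2.2.2, s.1, s.2.2.1, s.2.1,
      s.2.2.2.2.1) : T7 β))
    (Equiv.mk
      (fun s : T7 β => ((s.2.2.2.1, s.2.2.2.2.2.1, s.2.2.2.2.2.2, s.1, s.2.2.1, s.2.1,
        s.2.2.2.2.1) : T7 β))
      (fun t => (t.2.2.2.1, t.2.2.2.2.2.1, t.2.2.2.2.1, t.1, t.2.2.2.2.2.2, t.2.1,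
        t.2.2.1))
      (fun _ => rfl) (fun _ => rfl)).bijective
    _ _ (fun s => rfl)).symm

lemma perm7c {β M : Type*} [Fintype β] [AddCommMonoid M]
    (F : β → β → β → β → β → β → β → M) :
    ∑ a1, ∑ a2, ∑ a3, ∑ b, ∑ c, ∑ b', ∑ c', F a1 a2 a3 b c b' c'
      = ∑ b', ∑ c', ∑ c, ∑ a1, ∑ b, ∑ a2, ∑ a3, F a1 a2 a3 b c b' c' := by
  have h1 : (∑ a1, ∑ a2, ∑ a3, ∑ b, ∑ c, ∑ b', ∑ c', F a1 a2 a3 b c b' c')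
      = ∑ t : T7 β, F t.1 t.2.1 t.2.2.1 t.2.2.2.1 t.2.2.2.2.1 t.2.2.2.2.2.1
          t.2.2.2.2.2.2 := by
    simp only [Fintype.sum_prod_type]
  have h2 : (∑ b', ∑ c', ∑ c, ∑ a1, ∑ b, ∑ a2, ∑ a3, F a1 a2 a3 b c b' c')
      = ∑ s : T7 β, F s.2.2.2.1 s.2.2.2.2.2.1 s.2.2.2.2.2.2 s.2.2.2.2.1 s.2.2.1 s.1
          s.2.1 := by
    simp only [Fintype.sum_prod_type]
  rw [h1, h2]
  exact (Fintype.sum_bijective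
    (fun s : T7 β => ((s.2.2.2.1, s.2.2.2.2.2.1, s.2.2.2.2.2.2, s.2.2.2.2.1, s.2.2.1,
      s.1, s.2.1) : T7 β))
    (Equiv.mk
      (fun s : T7 β => ((s.2.2.2.1, s.2.2.2.2.2.1, s.2.2.2.2.2.2, s.2.2.2.2.1, s.2.2.1,
        s.1, s.2.1) : T7 β))
      (fun t => (t.2.2.2.2.2.1, t.2.2.2.2.2.2, t.2.2.2.2.1, t.1, t.2.2.2.1, t.2.1,
        t.2.2.1))
      (fun _ => rfl) (fun _ => rfl)).bijective
    _ _ (fun s => rfl)).symm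


variable (f : Fin r → Fin r → Fin r → ℝ) (u : Fin r → A) (v : Fin r → Fin 4 → A)

lemma inner1 (hv : ∀ a μ (x : A), Commute (v a μ) x) (a1 a2 a3 : Fin r) (μ : Fin 4) :
    ∑ ρ, minkEta ρ • (-(v a1 μ * -∑ b, ∑ c, f a2 b c • (u b * v c ρ)) *
        -∑ b, ∑ c, f a3 b c • (u b * v c ρ))
    = ∑ b, ∑ c, ∑ b', ∑ c', (-(f a2 b c * f a3 b' c')) •
        (u b * u b' * ∑ ρ, minkEta ρ • (v a1 μ * (v c ρ * v c' ρ))) := by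
  simp only [mul_neg, neg_neg, neg_mul, neg_smul, smul_neg, Finset.sum_neg_distrib,
    Finset.mul_sum, Finset.sum_mul, smul_mul_assoc, mul_smul_comm, smul_smul,
    Finset.smul_sum]
  refine neg_inj.mpr ((perm5a (fun x a b c d =>
      (minkEta x * (f a3 a b * f a2 c d)) • (v a1 μ * (u c * v d x) * (u a * v b x)))).trans ?_)
  refine Finset.sum_congr rfl fun b _ => Finset.sum_congr rfl fun c _ =>
    Finset.sum_congr rfl fun b' _ => Finset.sum_congr rfl fun c' _ =>
    Finset.sum_congr rfl fun ρ _ => ?_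
  rw [mono1 u v hv]
  module

lemma inner2 (hv : ∀ a μ (x : A), Commute (v a μ) x) (a1 a2 a3 : Fin r) (μ : Fin 4) :
    ∑ ρ, minkEta ρ • ((v a1 ρ * -∑ b, ∑ c, f a2 b c • (u b * v c μ)) *
        -∑ b, ∑ c, f a3 b c • (u b * v c ρ))
    = ∑ b, ∑ c, ∑ b', ∑ c', (f a2 b c * f a3 b' c') •
        (u b * u b' * ∑ ρ, minkEta ρ • (v c μ * (v a1 ρ * v c' ρ))) := by
  simp only [mul_neg, neg_neg, neg_mul, neg_smul, smul_neg, Finset.sum_neg_distrib,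
    Finset.mul_sum, Finset.sum_mul, smul_mul_assoc, mul_smul_comm, smul_smul,
    Finset.smul_sum]
  refine ((perm5a (fun x a b c d =>
      (minkEta x * (f a3 a b * f a2 c d)) • (v a1 x * (u c * v d μ) * (u a * v b x)))).trans ?_)
  refine Finset.sum_congr rfl fun b _ => Finset.sum_congr rfl fun c _ =>
    Finset.sum_congr rfl fun b' _ => Finset.sum_congr rfl fun c' _ =>
    Finset.sum_congr rfl fun ρ _ => ?_
  rw [mono2 u v hv]
  module

lemma inner3 (hv : ∀ a μ (x : A), Commute (v a μ) x) (a1 a2 a3 : Fin r) (μ : Fin 4) :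
    ∑ ρ, minkEta ρ • ((v a1 ρ * ∑ b, ∑ c, f a2 b c • (v b ρ * v c μ)) *
        (1 / 2 : ℝ) • ∑ b, ∑ c, f a3 b c • (u b * u c))
    = ∑ b, ∑ c, ∑ b', ∑ c', ((1 / 2 : ℝ) * (f a2 b c * f a3 b' c')) •
        (u b' * u c' * ∑ ρ, minkEta ρ • (v c μ * (v a1 ρ * v b ρ))) := by
  simp only [mul_neg, neg_neg, neg_mul, neg_smul, smul_neg, Finset.sum_neg_distrib,
    Finset.mul_sum, Finset.sum_mul, smul_mul_assoc, mul_smul_comm, smul_smul,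
    Finset.smul_sum]
  refine ((perm5a (fun x a b c d =>
      (minkEta x * (1 / 2 * f a3 a b * f a2 c d)) •
        (v a1 x * (v c x * v d μ) * (u a * u b)))).trans ?_)
  refine Finset.sum_congr rfl fun b _ => Finset.sum_congr rfl fun c _ =>
    Finset.sum_congr rfl fun b' _ => Finset.sum_congr rfl fun c' _ =>
    Finset.sum_congr rfl fun ρ _ => ?_
  rw [mono3 u v hv]
  module


lemma L1 (hv : ∀ a μ (x : A), Commute (v a μ) x) (μ : Fin 4) :
    ∑ a1, ∑ a2, ∑ a3, f a1 a2 a3 • ∑ ρ, minkEta ρ •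
        (-(v a1 μ * -∑ b, ∑ c, f a2 b c • (u b * v c ρ)) *
          -∑ b, ∑ c, f a3 b c • (u b * v c ρ))
    = ∑ p, ∑ q, ∑ x, ∑ y, ∑ z,
        (∑ a, ∑ b, -(f x a b * (f a p y * f b q z))) • Mn u v μ p q x y z := by
  calc ∑ a1, ∑ a2, ∑ a3, f a1 a2 a3 • ∑ ρ, minkEta ρ •
        (-(v a1 μ * -∑ b, ∑ c, f a2 b c • (u b * v c ρ)) *
          -∑ b, ∑ c, f a3 b c • (u b * v c ρ))
      = ∑ a1, ∑ a2, ∑ a3, f a1 a2 a3 • ∑ b, ∑ c, ∑ b', ∑ c',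
          (-(f a2 b c * f a3 b' c')) •
            (u b * u b' * ∑ ρ, minkEta ρ • (v a1 μ * (v c ρ * v c' ρ))) := by
        refine Finset.sum_congr rfl fun a1 _ => Finset.sum_congr rfl fun a2 _ =>
          Finset.sum_congr rfl fun a3 _ => ?_
        rw [inner1 f u v hv a1 a2 a3 μ]
    _ = ∑ a1, ∑ a2, ∑ a3, ∑ b, ∑ c, ∑ b', ∑ c',
          (-(f a1 a2 a3 * (f a2 b c * f a3 b' c'))) •
            (u b * u b' * ∑ ρ, minkEta ρ • (v a1 μ * (v c ρ * v c' ρ))) := by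
        simp only [Finset.smul_sum, smul_smul, mul_neg]
    _ = ∑ b, ∑ b', ∑ a1, ∑ c, ∑ c', ∑ a2, ∑ a3,
          (-(f a1 a2 a3 * (f a2 b c * f a3 b' c'))) •
            (u b * u b' * ∑ ρ, minkEta ρ • (v a1 μ * (v c ρ * v c' ρ))) :=
        perm7a (fun a1 a2 a3 b c b' c' =>
          (-(f a1 a2 a3 * (f a2 b c * f a3 b' c'))) •
            (u b * u b' * ∑ ρ, minkEta ρ • (v a1 μ * (v c ρ * v c' ρ))))
    _ = ∑ p, ∑ q, ∑ x, ∑ y, ∑ z,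
          (∑ a, ∑ b, -(f x a b * (f a p y * f b q z))) • Mn u v μ p q x y z := by
        simp only [← Finset.sum_smul, Mn, W]

lemma L2 (hv : ∀ a μ (x : A), Commute (v a μ) x) (μ : Fin 4) :
    ∑ a1, ∑ a2, ∑ a3, f a1 a2 a3 • ∑ ρ, minkEta ρ •
        ((v a1 ρ * -∑ b, ∑ c, f a2 b c • (u b * v c μ)) *
          -∑ b, ∑ c, f a3 b c • (u b * v c ρ))
    = ∑ p, ∑ q, ∑ x, ∑ y, ∑ z,
        (∑ a, ∑ b, f y a b * (f a p x * f b q z)) • Mn u v μ p q x y z := by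
  calc ∑ a1, ∑ a2, ∑ a3, f a1 a2 a3 • ∑ ρ, minkEta ρ •
        ((v a1 ρ * -∑ b, ∑ c, f a2 b c • (u b * v c μ)) *
          -∑ b, ∑ c, f a3 b c • (u b * v c ρ))
      = ∑ a1, ∑ a2, ∑ a3, f a1 a2 a3 • ∑ b, ∑ c, ∑ b', ∑ c',
          (f a2 b c * f a3 b' c') •
            (u b * u b' * ∑ ρ, minkEta ρ • (v c μ * (v a1 ρ * v c' ρ))) := by
        refine Finset.sum_congr rfl fun a1 _ => Finset.sum_congr rfl fun a2 _ =>
          Finset.sum_congr rfl fun a3 _ => ?_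
        rw [inner2 f u v hv a1 a2 a3 μ]
    _ = ∑ a1, ∑ a2, ∑ a3, ∑ b, ∑ c, ∑ b', ∑ c',
          (f a1 a2 a3 * (f a2 b c * f a3 b' c')) •
            (u b * u b' * ∑ ρ, minkEta ρ • (v c μ * (v a1 ρ * v c' ρ))) := by
        simp only [Finset.smul_sum, smul_smul]
    _ = ∑ b, ∑ b', ∑ c, ∑ a1, ∑ c', ∑ a2, ∑ a3,
          (f a1 a2 a3 * (f a2 b c * f a3 b' c')) •
            (u b * u b' * ∑ ρ, minkEta ρ • (v c μ * (v a1 ρ * v c' ρ))) :=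
        perm7b (fun a1 a2 a3 b c b' c' =>
          (f a1 a2 a3 * (f a2 b c * f a3 b' c')) •
            (u b * u b' * ∑ ρ, minkEta ρ • (v c μ * (v a1 ρ * v c' ρ))))
    _ = ∑ p, ∑ q, ∑ x, ∑ y, ∑ z,
          (∑ a, ∑ b, f y a b * (f a p x * f b q z)) • Mn u v μ p q x y z := by
        simp only [← Finset.sum_smul, Mn, W]

lemma L3 (hv : ∀ a μ (x : A), Commute (v a μ) x) (μ : Fin 4) :
    ∑ a1, ∑ a2, ∑ a3, f a1 a2 a3 • ∑ ρ, minkEta ρ •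
        ((v a1 ρ * ∑ b, ∑ c, f a2 b c • (v b ρ * v c μ)) *
          (1 / 2 : ℝ) • ∑ b, ∑ c, f a3 b c • (u b * u c))
    = ∑ p, ∑ q, ∑ x, ∑ y, ∑ z,
        (∑ a, ∑ b, f y a b * ((1 / 2 : ℝ) * (f a z x * f b p q))) • Mn u v μ p q x y z := by
  calc ∑ a1, ∑ a2, ∑ a3, f a1 a2 a3 • ∑ ρ, minkEta ρ •
        ((v a1 ρ * ∑ b, ∑ c, f a2 b c • (v b ρ * v c μ)) *
          (1 / 2 : ℝ) • ∑ b, ∑ c, f a3 b c • (u b * u c))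
      = ∑ a1, ∑ a2, ∑ a3, f a1 a2 a3 • ∑ b, ∑ c, ∑ b', ∑ c',
          ((1 / 2 : ℝ) * (f a2 b c * f a3 b' c')) •
            (u b' * u c' * ∑ ρ, minkEta ρ • (v c μ * (v a1 ρ * v b ρ))) := by
        refine Finset.sum_congr rfl fun a1 _ => Finset.sum_congr rfl fun a2 _ =>
          Finset.sum_congr rfl fun a3 _ => ?_
        rw [inner3 f u v hv a1 a2 a3 μ]
    _ = ∑ a1, ∑ a2, ∑ a3, ∑ b, ∑ c, ∑ b', ∑ c',
          (f a1 a2 a3 * ((1 / 2 : ℝ) * (f a2 b c * f a3 b' c'))) •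
            (u b' * u c' * ∑ ρ, minkEta ρ • (v c μ * (v a1 ρ * v b ρ))) := by
        simp only [Finset.smul_sum, smul_smul]
    _ = ∑ b', ∑ c', ∑ c, ∑ a1, ∑ b, ∑ a2, ∑ a3,
          (f a1 a2 a3 * ((1 / 2 : ℝ) * (f a2 b c * f a3 b' c'))) •
            (u b' * u c' * ∑ ρ, minkEta ρ • (v c μ * (v a1 ρ * v b ρ))) :=
        perm7c (fun a1 a2 a3 b c b' c' =>
          (f a1 a2 a3 * ((1 / 2 : ℝ) * (f a2 b c * f a3 b' c'))) •
            (u b' * u c' * ∑ ρ, minkEta ρ • (v c μ * (v a1 ρ * v b ρ))))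
    _ = ∑ p, ∑ q, ∑ x, ∑ y, ∑ z,
          (∑ a, ∑ b, f y a b * ((1 / 2 : ℝ) * (f a z x * f b p q))) • Mn u v μ p q x y z := by
        simp only [← Finset.sum_smul, Mn, W]


lemma keyfact (hf1 : ∀ a b c, f a b c = - f b a c) (hf2 : ∀ a b c, f a b c = - f a c b)
    (p q x y z a b : Fin r) :
    (-(f x a b * (f a p y * f b q z)) + f y a b * (f a p x * f b q z)
        + f y a b * ((1 / 2 : ℝ) * (f a z x * f b p q)))
      - (-(f x a b * (f a q y * f b p z)) + f y a b * (f a q x * f b p z)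
        + f y a b * ((1 / 2 : ℝ) * (f a z x * f b q p)))
      + (-(f x a b * (f a p z * f b q y)) + f z a b * (f a p x * f b q y)
        + f z a b * ((1 / 2 : ℝ) * (f a y x * f b p q)))
      - (-(f x a b * (f a q z * f b p y)) + f z a b * (f a q x * f b p y)
        + f z a b * ((1 / 2 : ℝ) * (f a y x * f b q p)))
    = ((-f p y b) * (f a b q * f a x z + f a q x * f a b z + f a x b * f a q z)
        + (-f p z b) * (f a b q * f a x y + f a q x * f a b y + f a x b * f a q y)
        + f q y b * (f a b p * f a x z + f a p x * f a b z + f a x b * f a p z)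
        + f q z b * (f a b p * f a x y + f a p x * f a b y + f a x b * f a p y))
      + (f x y a * (f b a p * f b q z + f b p q * f b a z + f b q a * f b p z)
        + f x z a * (f b a p * f b q y + f b p q * f b a y + f b q a * f b p y)) := by
  have h7 : f b q a = f a b q := by rw [hf2 b q a, hf1 b a q]; ring
  have h9 : f p y b = f b p y := by rw [hf2 p y b, hf1 p b y]; ring
  have h10 : f p z b = f b p z := by rw [hf2 p z b, hf1 p b z]; ring
  have h11 : f q y b = f b q y := by rw [hf2 q y b, hf1 q b y]; ring
  have h12 : f q z b = f b q z := by rw [hf2 q z b, hf1 q b z]; ring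
  have h13 : f x a b = f a b x := by rw [hf1 x a b, hf2 a x b]; ring
  have h14 : f x y a = f a x y := by rw [hf2 x y a, hf1 x a y]; ring
  have h15 : f x z a = f a x z := by rw [hf2 x z a, hf1 x a z]; ring
  have h16 : f y a b = f a b y := by rw [hf1 y a b, hf2 a y b]; ring
  have h17 : f z a b = f a b z := by rw [hf1 z a b, hf2 a z b]; ring
  rw [h13, h16, h17, h7, h9, h10, h11, h12, h14, h15, hf2 a x b, hf2 a y x, hf2 a z x,
    hf1 b a p, hf1 b a y, hf1 b a z, hf2 b q p]
  ring

lemma coeffzero (hf1 : ∀ a b c, f a b c = - f b a c)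
    (hf2 : ∀ a b c, f a b c = - f a c b)
    (hJacobi : ∀ a b c d,
      ∑ e, (f e a b * f e c d + f e b c * f e a d + f e c a * f e b d) = 0)
    (p q x y z : Fin r) :
    ((∑ a, ∑ b, -(f x a b * (f a p y * f b q z)))
        + (∑ a, ∑ b, f y a b * (f a p x * f b q z))
        + (∑ a, ∑ b, f y a b * ((1 / 2 : ℝ) * (f a z x * f b p q))))
      - ((∑ a, ∑ b, -(f x a b * (f a q y * f b p z)))
        + (∑ a, ∑ b, f y a b * (f a q x * f b p z))
        + (∑ a, ∑ b, f y a b * ((1 / 2 : ℝ) * (f a z x * f b q p))))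
      + ((∑ a, ∑ b, -(f x a b * (f a p z * f b q y)))
        + (∑ a, ∑ b, f z a b * (f a p x * f b q y))
        + (∑ a, ∑ b, f z a b * ((1 / 2 : ℝ) * (f a y x * f b p q))))
      - ((∑ a, ∑ b, -(f x a b * (f a q z * f b p y)))
        + (∑ a, ∑ b, f z a b * (f a q x * f b p y))
        + (∑ a, ∑ b, f z a b * ((1 / 2 : ℝ) * (f a y x * f b q p)))) = 0 := by
  have merge : ((∑ a, ∑ b, -(f x a b * (f a p y * f b q z)))
        + (∑ a, ∑ b, f y a b * (f a p x * f b q z))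
        + (∑ a, ∑ b, f y a b * ((1 / 2 : ℝ) * (f a z x * f b p q))))
      - ((∑ a, ∑ b, -(f x a b * (f a q y * f b p z)))
        + (∑ a, ∑ b, f y a b * (f a q x * f b p z))
        + (∑ a, ∑ b, f y a b * ((1 / 2 : ℝ) * (f a z x * f b q p))))
      + ((∑ a, ∑ b, -(f x a b * (f a p z * f b q y)))
        + (∑ a, ∑ b, f z a b * (f a p x * f b q y))
        + (∑ a, ∑ b, f z a b * ((1 / 2 : ℝ) * (f a y x * f b p q))))
      - ((∑ a, ∑ b, -(f x a b * (f a q z * f b p y)))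
        + (∑ a, ∑ b, f z a b * (f a q x * f b p y))
        + (∑ a, ∑ b, f z a b * ((1 / 2 : ℝ) * (f a y x * f b q p))))
      = ∑ a, ∑ b,
        (((-f p y b) * (f a b q * f a x z + f a q x * f a b z + f a x b * f a q z)
          + (-f p z b) * (f a b q * f a x y + f a q x * f a b y + f a x b * f a q y)
          + f q y b * (f a b p * f a x z + f a p x * f a b z + f a x b * f a p z)
          + f q z b * (f a b p * f a x y + f a p x * f a b y + f a x b * f a p y))
        + (f x y a * (f b a p * f b q z + f b p q * f b a z + f b q a * f b p z)
          + f x z a * (f b a p * f b q y + f b p q * f b a y + f b q a * f b p y))) := by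
    simp only [← Finset.sum_add_distrib, ← Finset.sum_sub_distrib]
    refine Finset.sum_congr rfl fun a _ => Finset.sum_congr rfl fun b _ => ?_
    linear_combination keyfact f hf1 hf2 p q x y z a b
  rw [merge]
  rw [show (∑ a, ∑ b : Fin r,
        (((-f p y b) * (f a b q * f a x z + f a q x * f a b z + f a x b * f a q z)
          + (-f p z b) * (f a b q * f a x y + f a q x * f a b y + f a x b * f a q y)
          + f q y b * (f a b p * f a x z + f a p x * f a b z + f a x b * f a p z)
          + f q z b * (f a b p * f a x y + f a p x * f a b y + f a x b * f a p y))
        + (f x y a * (f b a p * f b q z + f b p q * f b a z + f b q a * f b p z)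
          + f x z a * (f b a p * f b q y + f b p q * f b a y + f b q a * f b p y))))
      = (∑ a, ∑ b : Fin r,
        ((-f p y b) * (f a b q * f a x z + f a q x * f a b z + f a x b * f a q z)
          + (-f p z b) * (f a b q * f a x y + f a q x * f a b y + f a x b * f a q y)
          + f q y b * (f a b p * f a x z + f a p x * f a b z + f a x b * f a p z)
          + f q z b * (f a b p * f a x y + f a p x * f a b y + f a x b * f a p y)))
      + (∑ a, ∑ b : Fin r,
        (f x y a * (f b a p * f b q z + f b p q * f b a z + f b q a * f b p z)
          + f x z a * (f b a p * f b q y + f b p q * f b a y + f b q a * f b p y)))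
    from by simp only [← Finset.sum_add_distrib]]
  have hA : (∑ a, ∑ b : Fin r,
        ((-f p y b) * (f a b q * f a x z + f a q x * f a b z + f a x b * f a q z)
          + (-f p z b) * (f a b q * f a x y + f a q x * f a b y + f a x b * f a q y)
          + f q y b * (f a b p * f a x z + f a p x * f a b z + f a x b * f a p z)
          + f q z b * (f a b p * f a x y + f a p x * f a b y + f a x b * f a p y))) = 0 := by
    rw [Finset.sum_comm]
    refine Finset.sum_eq_zero fun b _ => ?_
    simp only [Finset.sum_add_distrib, ← Finset.mul_sum]
    have j1 := hJacobi b q x z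
    have j2 := hJacobi b q x y
    have j3 := hJacobi b p x z
    have j4 := hJacobi b p x y
    simp only [Finset.sum_add_distrib] at j1 j2 j3 j4
    linear_combination (-f p y b) * j1 + (-f p z b) * j2 + f q y b * j3 + f q z b * j4
  have hB : (∑ a, ∑ b : Fin r,
        (f x y a * (f b a p * f b q z + f b p q * f b a z + f b q a * f b p z)
          + f x z a * (f b a p * f b q y + f b p q * f b a y + f b q a * f b p y))) = 0 := by
    refine Finset.sum_eq_zero fun a _ => ?_
    simp only [Finset.sum_add_distrib, ← Finset.mul_sum]
    have j1 := hJacobi a p q z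
    have j2 := hJacobi a p q y
    simp only [Finset.sum_add_distrib] at j1 j2
    linear_combination f x y a * j1 + f x z a * j2
  rw [hA, hB, add_zero]


lemma step2 (hu : ∀ a b, u a * u b = -(u b * u a))
    (hv : ∀ a μ (x : A), Commute (v a μ) x) (μ : Fin 4)
    (G : Fin r → Fin r → Fin r → Fin r → Fin r → ℝ)
    (hG : ∀ p q x y z, G p q x y z - G q p x y z + G p q x z y - G q p x z y = 0) :
    ∑ p, ∑ q, ∑ x, ∑ y, ∑ z, G p q x y z • Mn u v μ p q x y z = 0 := by
  have hM1 : ∀ p q x y z, Mn u v μ q p x y z = -Mn u v μ p q x y z := by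
    intro p q x y z
    show u q * u p * W v μ x y z = -(u p * u q * W v μ x y z)
    rw [hu q p, neg_mul]
  have hM2 : ∀ p q x y z, Mn u v μ p q x z y = Mn u v μ p q x y z := by
    intro p q x y z
    show u p * u q * W v μ x z y = u p * u q * W v μ x y z
    congr 1
    refine Finset.sum_congr rfl fun ρ _ => ?_
    rw [(hv z ρ (v y ρ)).eq]
  have flip : ∀ H : Fin r → Fin r → Fin r → Fin r → Fin r → ℝ,
      ∑ p, ∑ q, ∑ x, ∑ y, ∑ z, H p q x y z • Mn u v μ p q x y z
        = -∑ p, ∑ q, ∑ x, ∑ y, ∑ z, H q p x y z • Mn u v μ p q x y z := by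
    intro H
    calc ∑ p, ∑ q, ∑ x, ∑ y, ∑ z, H p q x y z • Mn u v μ p q x y z
        = ∑ p, ∑ q, ∑ x, ∑ y, ∑ z, H q p x y z • Mn u v μ q p x y z := Finset.sum_comm
      _ = ∑ p, ∑ q, ∑ x, ∑ y, ∑ z, -(H q p x y z • Mn u v μ p q x y z) := by
          refine Finset.sum_congr rfl fun p _ => Finset.sum_congr rfl fun q _ =>
            Finset.sum_congr rfl fun x _ => Finset.sum_congr rfl fun y _ =>
            Finset.sum_congr rfl fun z _ => ?_
          rw [hM1 p q x y z, smul_neg]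
      _ = -∑ p, ∑ q, ∑ x, ∑ y, ∑ z, H q p x y z • Mn u v μ p q x y z := by
          simp only [Finset.sum_neg_distrib]
  have sym : ∀ H : Fin r → Fin r → Fin r → Fin r → Fin r → ℝ,
      ∑ p, ∑ q, ∑ x, ∑ y, ∑ z, H p q x y z • Mn u v μ p q x y z
        = ∑ p, ∑ q, ∑ x, ∑ y, ∑ z, H p q x z y • Mn u v μ p q x y z := by
    intro H
    calc ∑ p, ∑ q, ∑ x, ∑ y, ∑ z, H p q x y z • Mn u v μ p q x y z
        = ∑ p, ∑ q, ∑ x, ∑ y, ∑ z, H p q x z y • Mn u v μ p q x z y := by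
          refine Finset.sum_congr rfl fun p _ => Finset.sum_congr rfl fun q _ =>
            Finset.sum_congr rfl fun x _ => ?_
          exact Finset.sum_comm
      _ = ∑ p, ∑ q, ∑ x, ∑ y, ∑ z, H p q x z y • Mn u v μ p q x y z := by
          refine Finset.sum_congr rfl fun p _ => Finset.sum_congr rfl fun q _ =>
            Finset.sum_congr rfl fun x _ => Finset.sum_congr rfl fun y _ =>
            Finset.sum_congr rfl fun z _ => ?_
          rw [hM2 p q x y z]
  have big : ∑ p, ∑ q, ∑ x, ∑ y, ∑ z,
      (G p q x y z - G q p x y z + G p q x z y - G q p x z y) • Mn u v μ p q x y z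
        = 0 := by
    refine Finset.sum_eq_zero fun p _ => Finset.sum_eq_zero fun q _ =>
      Finset.sum_eq_zero fun x _ => Finset.sum_eq_zero fun y _ =>
      Finset.sum_eq_zero fun z _ => ?_
    rw [hG p q x y z, zero_smul]
  simp only [sub_smul, add_smul, Finset.sum_add_distrib, Finset.sum_sub_distrib] at big
  have t1 : (∑ p, ∑ q, ∑ x, ∑ y, ∑ z, G q p x y z • Mn u v μ p q x y z)
      = -∑ p, ∑ q, ∑ x, ∑ y, ∑ z, G p q x y z • Mn u v μ p q x y z := by
    rw [flip G, neg_neg]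
  have t2 : (∑ p, ∑ q, ∑ x, ∑ y, ∑ z, G p q x z y • Mn u v μ p q x y z)
      = ∑ p, ∑ q, ∑ x, ∑ y, ∑ z, G p q x y z • Mn u v μ p q x y z := (sym G).symm
  have t3 : (∑ p, ∑ q, ∑ x, ∑ y, ∑ z, G q p x z y • Mn u v μ p q x y z)
      = -∑ p, ∑ q, ∑ x, ∑ y, ∑ z, G p q x y z • Mn u v μ p q x y z := by
    rw [(sym G).trans (flip fun p q x y z => G p q x z y), neg_neg]
  rw [t1, t2, t3] at big
  have h4 : (∑ p, ∑ q, ∑ x, ∑ y, ∑ z, G p q x y z • Mn u v μ p q x y z)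
      = (1 / 4 : ℝ) • ((∑ p, ∑ q, ∑ x, ∑ y, ∑ z, G p q x y z • Mn u v μ p q x y z)
        - -(∑ p, ∑ q, ∑ x, ∑ y, ∑ z, G p q x y z • Mn u v μ p q x y z)
        + (∑ p, ∑ q, ∑ x, ∑ y, ∑ z, G p q x y z • Mn u v μ p q x y z)
        - -(∑ p, ∑ q, ∑ x, ∑ y, ∑ z, G p q x y z • Mn u v μ p q x y z)) := by
    module
  rw [h4, big, smul_zero]

lemma coeffzero' (hf1 : ∀ a b c, f a b c = - f b a c)
    (hf2 : ∀ a b c, f a b c = - f a c b)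
    (hJacobi : ∀ a b c d,
      ∑ e, (f e a b * f e c d + f e b c * f e a d + f e c a * f e b d) = 0)
    (p q x y z : Fin r) :
    (∑ a, ∑ b, (-(f x a b * (f a p y * f b q z)) + f y a b * (f a p x * f b q z)
        + f y a b * ((1 / 2 : ℝ) * (f a z x * f b p q))))
      - (∑ a, ∑ b, (-(f x a b * (f a q y * f b p z)) + f y a b * (f a q x * f b p z)
        + f y a b * ((1 / 2 : ℝ) * (f a z x * f b q p))))
      + (∑ a, ∑ b, (-(f x a b * (f a p z * f b q y)) + f z a b * (f a p x * f b q y)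
        + f z a b * ((1 / 2 : ℝ) * (f a y x * f b p q))))
      - (∑ a, ∑ b, (-(f x a b * (f a q z * f b p y)) + f z a b * (f a q x * f b p y)
        + f z a b * ((1 / 2 : ℝ) * (f a y x * f b q p)))) = 0 := by
  simp only [Finset.sum_add_distrib]
  exact coeffzero f hf1 hf2 hJacobi p q x y z

end F11aux

/-- in a graded-commutative algebra with even central generators `v_a^μ` and
pairwise anticommuting odd generators `u_a`, for totally antisymmetric `f` satisfying the
Jacobi identity, with `B_a^μ = −f_{abc} u_b v_c^μ`, `B_a = (1/2) f_{abc} u_b u_c` and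
`E_a^{ρμ} = f_{abc} v_b^ρ v_c^μ`, the combination
`F^μ = f_{a₁a₂a₃}[(−v_{a₁}^μ B_{a₂}^ρ + v_{a₁}^ρ B_{a₂}^μ) B_{a₃ρ} + v_{a₁ρ} E_{a₂}^{ρμ} B_{a₃}]`
vanishes. -/
theorem F_mu_vanishes
    {r : ℕ} {A : Type*} [Ring A] [Algebra ℝ A]
    (f : Fin r → Fin r → Fin r → ℝ)
    (hf1 : ∀ a b c, f a b c = - f b a c)
    (hf2 : ∀ a b c, f a b c = - f a c b)
    (hJacobi : ∀ a b c d,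
      ∑ e, (f e a b * f e c d + f e b c * f e a d + f e c a * f e b d) = 0)
    (u : Fin r → A) (v : Fin r → Fin 4 → A)
    (hu : ∀ a b, u a * u b = -(u b * u a))
    (hvcentral : ∀ a μ (x : A), Commute (v a μ) x) :
    ∀ μ : Fin 4,
      (let Bup : Fin r → Fin 4 → A := fun a ρ => - ∑ b, ∑ c, f a b c • (u b * v c ρ)
       let Bsc : Fin r → A := fun a => (1 / 2 : ℝ) • ∑ b, ∑ c, f a b c • (u b * u c)
       let Eup : Fin r → Fin 4 → Fin 4 → A := fun a ρ σ =>
         ∑ b, ∑ c, f a b c • (v b ρ * v c σ)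
       ∑ a₁, ∑ a₂, ∑ a₃, f a₁ a₂ a₃ •
         ∑ ρ, minkEta ρ •
           ((-(v a₁ μ * Bup a₂ ρ) + v a₁ ρ * Bup a₂ μ) * Bup a₃ ρ +
             v a₁ ρ * Eup a₂ ρ μ * Bsc a₃)) = 0 := by
  intro μ
  dsimp only
  simp only [add_mul, smul_add, Finset.sum_add_distrib]
  rw [F11aux.L1 f u v hvcentral μ, F11aux.L2 f u v hvcentral μ, F11aux.L3 f u v hvcentral μ]
  simp only [← add_smul, ← Finset.sum_add_distrib]
  exact F11aux.step2 u v hu hvcentral μ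
    (fun p q x y z => ∑ a, ∑ b, (-(f x a b * (f a p y * f b q z))
      + f y a b * (f a p x * f b q z)
      + f y a b * ((1 / 2 : ℝ) * (f a z x * f b p q))))
    (fun p q x y z => F11aux.coeffzero' f hf1 hf2 hJacobi p q x y z)
end
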